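/- arXiv:0803.3007 — 7 statements merged into one kernel-verified Lean document; each statement's English description precedes it below -/
import Mathlib

section
/- Let X and U be independent real random variables with E|X|^j < ∞ and E|U|^j < ∞ for all 0 ≤ j ≤ J, let W = X + U, and set ν_k = E(U^k) (so ν_0 = 1). Then for every 0 ≤ j ≤ J, E(X^j) = Σ_{k=0}^{j} C(j,k) · E(W^{j−k}) · P_k(ν_0, …, ν_k). -/
open MeasureTheory ProbabilityTheory Filter

private lemma choose_swap {j k i : ℕ} (h : k + i ≤ j) :
    j.choose k * (j - k).choose i = j.choose i * (j - i).choose k := by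
  have h1 := Nat.choose_mul (n := j) (Nat.le_add_right k i)
  have h2 := Nat.choose_mul (n := j) (Nat.le_add_left i k)
  have h3 : (k + i).choose k = (k + i).choose i := by
    rw [← Nat.choose_symm (Nat.le_add_left i k)]
    congr 1
    omega
  have e1 : k + i - k = i := by omega
  have e2 : k + i - i = k := by omega
  rw [e1] at h1
  rw [e2] at h2
  rw [← h1, ← h2, h3]

private lemma triangle_swap (n : ℕ) (f : ℕ → ℕ → ℝ) :
    ∑ k ∈ Finset.range (n + 1), ∑ i ∈ Finset.range (n + 1 - k), f k i
      = ∑ i ∈ Finset.range (n + 1), ∑ k ∈ Finset.range (n + 1 - i), f k i := by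
  have key : ∀ g : ℕ → ℕ → ℝ,
      ∑ k ∈ Finset.range (n + 1), ∑ i ∈ Finset.range (n + 1 - k), g k i
        = ∑ k ∈ Finset.range (n + 1), ∑ i ∈ Finset.range (n + 1),
            if k + i ≤ n then g k i else 0 := by
    intro g
    refine Finset.sum_congr rfl fun k hk => ?_
    rw [Finset.sum_ite, Finset.sum_const_zero, add_zero]
    refine Finset.sum_congr ?_ fun _ _ => rfl
    ext i
    simp only [Finset.mem_filter, Finset.mem_range]
    omega
  rw [key f, key (fun i k => f k i), Finset.sum_comm]
  refine Finset.sum_congr rfl fun k _ => Finset.sum_congr rfl fun i _ => ?_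
  simp [Nat.add_comm]

/-- Pure algebraic inversion lemma. -/
private lemma inversion (j : ℕ) (μ ν w p : ℕ → ℝ)
    (hw : ∀ m ≤ j, w m = ∑ i ∈ Finset.range (m + 1), (m.choose i : ℝ) * μ i * ν (m - i))
    (hν0 : ν 0 = 1) (hp0 : p 0 = 1)
    (hprec : ∀ m, 1 ≤ m → p m = -∑ k ∈ Finset.range m, (m.choose k : ℝ) * ν (m - k) * p k) :
    ∑ k ∈ Finset.range (j + 1), (j.choose k : ℝ) * w (j - k) * p k = μ j := by
  set q : ℕ → ℝ := fun m => ∑ k ∈ Finset.range (m + 1), (m.choose k : ℝ) * ν (m - k) * p k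
    with hq
  have hq0 : q 0 = 1 := by simp [hq, hν0, hp0]
  have hqm : ∀ m, 1 ≤ m → q m = 0 := by
    intro m hm
    have : q m = (∑ k ∈ Finset.range m, (m.choose k : ℝ) * ν (m - k) * p k)
        + (m.choose m : ℝ) * ν (m - m) * p m := by
      simp [hq, Finset.sum_range_succ]
    rw [this, Nat.choose_self, Nat.sub_self, hν0, hprec m hm]
    ring
  calc ∑ k ∈ Finset.range (j + 1), (j.choose k : ℝ) * w (j - k) * p k
      = ∑ k ∈ Finset.range (j + 1), ∑ i ∈ Finset.range (j + 1 - k),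
          (j.choose k : ℝ) * ((j - k).choose i : ℝ) * μ i * ν (j - k - i) * p k := by
        refine Finset.sum_congr rfl fun k hk => ?_
        have hk' : k ≤ j := by simpa [Nat.lt_succ_iff] using Finset.mem_range.mp hk
        rw [hw (j - k) (Nat.sub_le j k), Finset.mul_sum, Finset.sum_mul]
        have : j - k + 1 = j + 1 - k := by omega
        rw [this]
        refine Finset.sum_congr rfl fun i hi => ?_
        ring
    _ = ∑ i ∈ Finset.range (j + 1), ∑ k ∈ Finset.range (j + 1 - i),
          (j.choose k : ℝ) * ((j - k).choose i : ℝ) * μ i * ν (j - k - i) * p k :=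
        triangle_swap j _
    _ = ∑ i ∈ Finset.range (j + 1), (j.choose i : ℝ) * μ i * q (j - i) := by
        refine Finset.sum_congr rfl fun i hi => ?_
        have hi' : i ≤ j := by simpa [Nat.lt_succ_iff] using Finset.mem_range.mp hi
        have hrange : j + 1 - i = (j - i) + 1 := by omega
        rw [hq, hrange, Finset.mul_sum]
        refine Finset.sum_congr rfl fun k hk => ?_
        have hk' : k ≤ j - i := by simpa [Nat.lt_succ_iff] using Finset.mem_range.mp hk
        have hki : k + i ≤ j := by omega
        have hcast : (j.choose k : ℝ) * ((j - k).choose i : ℝ)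
            = (j.choose i : ℝ) * ((j - i).choose k : ℝ) := by
          rw [← Nat.cast_mul, ← Nat.cast_mul, choose_swap hki]
        have hsub : j - k - i = j - i - k := by omega
        rw [hsub]
        linear_combination (μ i * ν (j - i - k) * p k) * hcast
    _ = μ j := by
        rw [Finset.sum_range_succ]
        have hz : ∀ i ∈ Finset.range j, (j.choose i : ℝ) * μ i * q (j - i) = 0 := by
          intro i hi
          have : 1 ≤ j - i := by
            have := Finset.mem_range.mp hi; omega
          rw [hqm (j - i) this, mul_zero]
        rw [Finset.sum_eq_zero hz, Nat.sub_self, hq0, Nat.choose_self]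
        ring

/-- For independent `X`, `U` with finite moments up to order `J`,
with `W = X + U` and `ν k = E(U^k)`, one has
`E(X^j) = ∑_{k=0}^{j} C(j,k) E(W^{j-k}) P_k(ν_0, …, ν_k)` for all `j ≤ J`,
where the `P_j` satisfy the recursion `P_0(x_0) = x_0⁻¹` and, for `j ≥ 1`,
`x_0 P_j(x_0,…,x_j) = -∑_{k<j} C(j,k) x_{j-k} P_k(x_0,…,x_k)`. -/
theorem statement0
    {Ω : Type*} [MeasureSpace Ω] [IsProbabilityMeasure (ℙ : Measure Ω)]
    (J : ℕ) (X U : Ω → ℝ) (hX : Measurable X) (hU : Measurable U)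
    (hindep : IndepFun X U ℙ)
    (hXmom : ∀ j ≤ J, Integrable (fun ω => |X ω| ^ j) ℙ)
    (hUmom : ∀ j ≤ J, Integrable (fun ω => |U ω| ^ j) ℙ)
    (W : Ω → ℝ) (hW : ∀ ω, W ω = X ω + U ω)
    (ν : ℕ → ℝ) (hν : ∀ k, ν k = ∫ ω, (U ω) ^ k ∂ℙ)
    (P : ℕ → (ℕ → ℝ) → ℝ)
    (hP0 : ∀ x : ℕ → ℝ, P 0 x = (x 0)⁻¹)
    (hPrec : ∀ j : ℕ, 1 ≤ j → ∀ x : ℕ → ℝ,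
      x 0 * P j x = -∑ k ∈ Finset.range j, (j.choose k : ℝ) * x (j - k) * P k x) :
    ∀ j ≤ J, (∫ ω, (X ω) ^ j ∂ℙ)
      = ∑ k ∈ Finset.range (j + 1),
          (j.choose k : ℝ) * (∫ ω, (W ω) ^ (j - k) ∂ℙ) * P k ν := by
  -- integrability of powers
  have hXint : ∀ i ≤ J, Integrable (fun ω => (X ω) ^ i) ℙ := by
    intro i hi
    exact (hXmom i hi).mono' ((hX.pow_const i).aestronglyMeasurable)
      (Filter.Eventually.of_forall fun ω => by rw [Real.norm_eq_abs, abs_pow])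
  have hUint : ∀ i ≤ J, Integrable (fun ω => (U ω) ^ i) ℙ := by
    intro i hi
    exact (hUmom i hi).mono' ((hU.pow_const i).aestronglyMeasurable)
      (Filter.Eventually.of_forall fun ω => by rw [Real.norm_eq_abs, abs_pow])
  have hindeppow : ∀ i k : ℕ, IndepFun (fun ω => (X ω) ^ i) (fun ω => (U ω) ^ k) ℙ :=
    fun i k => hindep.comp (measurable_id.pow_const i) (measurable_id.pow_const k)
  have hν0 : ν 0 = 1 := by simp [hν 0]
  -- moment relation for W
  have hWmom : ∀ m ≤ J, (∫ ω, (W ω) ^ m ∂ℙ)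
      = ∑ i ∈ Finset.range (m + 1), (m.choose i : ℝ) * (∫ ω, (X ω) ^ i ∂ℙ) * ν (m - i) := by
    intro m hm
    have hint : ∀ i ∈ Finset.range (m + 1),
        Integrable (fun ω => (X ω) ^ i * (U ω) ^ (m - i) * (m.choose i : ℝ)) ℙ := by
      intro i hi
      have hi' : i ≤ m := by simpa [Nat.lt_succ_iff] using Finset.mem_range.mp hi
      exact (((hindeppow i (m - i)).integrable_mul
        (hXint i (hi'.trans hm)) (hUint (m - i) ((Nat.sub_le m i).trans hm)))).mul_const _
    calc (∫ ω, (W ω) ^ m ∂ℙ)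
        = ∫ ω, ∑ i ∈ Finset.range (m + 1),
            (X ω) ^ i * (U ω) ^ (m - i) * (m.choose i : ℝ) ∂ℙ := by
          refine integral_congr_ae (Filter.Eventually.of_forall fun ω => ?_)
          simp only [hW, add_pow]
      _ = ∑ i ∈ Finset.range (m + 1),
            ∫ ω, (X ω) ^ i * (U ω) ^ (m - i) * (m.choose i : ℝ) ∂ℙ :=
          integral_finset_sum _ hint
      _ = ∑ i ∈ Finset.range (m + 1), (m.choose i : ℝ) * (∫ ω, (X ω) ^ i ∂ℙ) * ν (m - i) := by
          refine Finset.sum_congr rfl fun i hi => ?_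
          have hi' : i ≤ m := by simpa [Nat.lt_succ_iff] using Finset.mem_range.mp hi
          rw [integral_mul_const]
          have key : (∫ ω, (X ω) ^ i * (U ω) ^ (m - i) ∂ℙ)
              = (∫ ω, (X ω) ^ i ∂ℙ) * ∫ ω, (U ω) ^ (m - i) ∂ℙ :=
            (hindeppow i (m - i)).integral_mul_eq_mul_integral
              (hXint i (hi'.trans hm)).aestronglyMeasurable (hUint (m - i) ((Nat.sub_le m i).trans hm)).aestronglyMeasurable
          rw [key, hν (m - i)]
          ring
  -- properties of p k := P k ν
  have hp0 : P 0 ν = 1 := by rw [hP0, hν0, inv_one]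
  have hprec : ∀ m, 1 ≤ m →
      P m ν = -∑ k ∈ Finset.range m, (m.choose k : ℝ) * ν (m - k) * P k ν := by
    intro m hm
    have := hPrec m hm ν
    rwa [hν0, one_mul] at this
  intro j hj
  exact (inversion j (fun i => ∫ ω, (X ω) ^ i ∂ℙ) ν (fun m => ∫ ω, (W ω) ^ m ∂ℙ)
    (fun k => P k ν) (fun m hm => hWmom m (hm.trans hj)) hν0 hp0 hprec).symm
end

section
/- Let (X_i, U_i, ε_i), i ≥ 1, be i.i.d. copies of (X, U, ε) in the errors-in-variables model with g(x) = Σ_{j=0}^{p} β_j^0 x^j, and set W_i = X_i + U_i, Y_i = g(X_i) + ε_i. Assume E|W|^{2p} < ∞, E(|Y|·(1+|W|^p)) < ∞, E|U|^j < ∞ for j ≤ 2p, and that the distribution of X has a nondegenerate continuous component (so that the moment matrix M = (E X^{j+k})_{0≤j,k≤p} is invertible). Define â_j = n^{−1}Σ_{k≤n} W_k^j, Â_j = n^{−1}Σ_{k≤n} Y_k W_k^j, b̂_j = Σ_{k=0}^{j} C(j,k) â_{j−k} P_k(ν_0,…,ν_k), B̂_j = Σ_{k=0}^{j} C(j,k)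 Â_{j−k} P_k(ν_0,…,ν_k) with ν_j = E(U^j), and β̂ = M̂^{−1} B̂ where M̂ has entries b̂_{j+k} and B̂ = (B̂_0,…,B̂_p)ᵀ. Then β̂ converges in probability to β^0 = (β_0^0,…,β_p^0)ᵀ as n → ∞. -/
open MeasureTheory ProbabilityTheory Filter
open Topology

open Finset

lemma aux_choose_mul {j k l : ℕ} (h : k + l ≤ j) :
    j.choose k * (j - k).choose l = j.choose l * (j - l).choose k := by
  have h1 := Nat.choose_mul (n := j) (k := k + l) (s := k) (Nat.le_add_right _ _)
  have h2 := Nat.choose_mul (n := j) (k := k + l) (s := l) (Nat.le_add_left _ _)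
  have h3 : (k + l).choose k = (k + l).choose l := by
    rw [← Nat.choose_symm (Nat.le_add_right k l)]
    congr 1
    omega
  simp only [Nat.add_sub_cancel, Nat.add_sub_cancel_left] at h1 h2
  rw [← h1, ← h2, h3]

lemma aux_binom_inv (ν : ℕ → ℝ) (P : ℕ → (ℕ → ℝ) → ℝ) (hν0 : ν 0 = 1)
    (hP0 : P 0 ν = (ν 0)⁻¹)
    (hPrec : ∀ j, 1 ≤ j →
      ν 0 * P j ν = -∑ k ∈ Finset.range j, (j.choose k : ℝ) * ν (j - k) * P k ν) :
    ∀ j, ∑ k ∈ Finset.range (j + 1), (j.choose k : ℝ) * ν (j - k) * P k ν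
      = if j = 0 then 1 else 0 := by
  intro j
  rcases Nat.eq_zero_or_pos j with rfl | hj
  · simp [hP0, hν0]
  · rw [Finset.sum_range_succ, if_neg (Nat.one_le_iff_ne_zero.mp hj)]
    have := hPrec j hj
    simp only [Nat.choose_self, Nat.cast_one, one_mul, Nat.sub_self]
    rw [hν0] at this
    rw [hν0, one_mul] at *
    rw [this]
    ring

lemma aux_conv_inv (ν : ℕ → ℝ) (P : ℕ → (ℕ → ℝ) → ℝ) (μ a : ℕ → ℝ) (j : ℕ)
    (hdelta : ∀ i, ∑ k ∈ Finset.range (i + 1), (i.choose k : ℝ) * ν (i - k) * P k ν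
      = if i = 0 then 1 else 0)
    (ha : ∀ m, m ≤ j → a m = ∑ l ∈ Finset.range (m + 1), (m.choose l : ℝ) * μ l * ν (m - l)) :
    ∑ k ∈ Finset.range (j + 1), (j.choose k : ℝ) * a (j - k) * P k ν = μ j := by
  have key : ∑ k ∈ Finset.range (j + 1), (j.choose k : ℝ) * a (j - k) * P k ν
      = ∑ k ∈ Finset.range (j + 1), ∑ l ∈ Finset.range (j - k + 1),
          ((j.choose k : ℝ) * ((j - k).choose l * μ l * ν (j - k - l))) * P k ν := by
    refine Finset.sum_congr rfl fun k hk => ?_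
    rw [ha (j - k) (Nat.sub_le _ _), Finset.mul_sum, Finset.sum_mul]
  rw [key]
  rw [Finset.sum_comm' (s' := fun l => Finset.range (j - l + 1)) (t' := Finset.range (j + 1))
    (by
      intro k l
      simp only [Finset.mem_range]
      omega)]
  have inner : ∀ l ∈ Finset.range (j + 1),
      ∑ k ∈ Finset.range (j - l + 1),
        ((j.choose k : ℝ) * ((j - k).choose l * μ l * ν (j - k - l))) * P k ν
      = (j.choose l : ℝ) * μ l * (if j - l = 0 then 1 else 0) := by
    intro l hl
    rw [Finset.mem_range] at hl
    rw [← hdelta (j - l), Finset.mul_sum]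
    refine Finset.sum_congr rfl fun k hk => ?_
    rw [Finset.mem_range] at hk
    have hkl : k + l ≤ j := by omega
    have hc : (j.choose k : ℝ) * ((j - k).choose l : ℝ)
        = (j.choose l : ℝ) * ((j - l).choose k : ℝ) := by
      rw [← Nat.cast_mul, ← Nat.cast_mul, aux_choose_mul hkl]
    have hsub : j - k - l = j - l - k := by omega
    rw [hsub]
    linear_combination (μ l * ν (j - l - k) * P k ν) * hc
  rw [Finset.sum_congr rfl inner]
  rw [Finset.sum_eq_single j]
  · simp
  · intro l hl hlj
    rw [Finset.mem_range] at hl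
    rw [if_neg (by omega), mul_zero]
  · intro h
    exact absurd (Finset.self_mem_range_succ j) h

lemma aux_pow_mul_pow_le {a b : ℝ} (ha : 0 ≤ a) (hb : 0 ≤ b) (m l : ℕ) :
    a ^ m * b ^ l ≤ a ^ (m + l) + b ^ (m + l) := by
  rcases le_total a b with h | h
  · calc a ^ m * b ^ l ≤ b ^ m * b ^ l := by gcongr
    _ = b ^ (m + l) := by rw [← pow_add]
    _ ≤ a ^ (m + l) + b ^ (m + l) := le_add_of_nonneg_left (by positivity)
  · calc a ^ m * b ^ l ≤ a ^ m * a ^ l := by gcongr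
    _ = a ^ (m + l) := by rw [← pow_add]
    _ ≤ a ^ (m + l) + b ^ (m + l) := le_add_of_nonneg_right (by positivity)

lemma aux_pow_le_one_add {a : ℝ} (ha : 0 ≤ a) {m M : ℕ} (h : m ≤ M) :
    a ^ m ≤ 1 + a ^ M := by
  rcases le_total a 1 with h1 | h1
  · calc a ^ m ≤ 1 := pow_le_one₀ ha h1
    _ ≤ 1 + a ^ M := le_add_of_nonneg_right (by positivity)
  · calc a ^ m ≤ a ^ M := pow_le_pow_right₀ h1 h
    _ ≤ 1 + a ^ M := le_add_of_nonneg_left one_pos.le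


/-- In the polynomial errors-in-variables model, the
moment-based estimator `β̂ = M̂⁻¹ B̂` computed from i.i.d. copies
`(X_i, U_i, ε_i)` of `(X, U, ε)` (with `W_i = X_i + U_i`,
`Y_i = g(X_i) + ε_i`, `g(x) = ∑_j β⁰_j x^j`) converges in probability
to `β⁰` as `n → ∞`, under the stated moment conditions and provided the
distribution of `X` has a nondegenerate continuous component. -/
theorem statement4
    {Ω : Type*} [MeasureSpace Ω] [IsProbabilityMeasure (ℙ : Measure Ω)]
    (p : ℕ) (β0 : Fin (p + 1) → ℝ) (X U ε : Ω → ℝ) (g : ℝ → ℝ)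
    (hX : Measurable X) (hU : Measurable U) (hε : Measurable ε)
    (hg : ∀ x, g x = ∑ j : Fin (p + 1), β0 j * x ^ (j : ℕ))
    (hindep : IndepFun X U ℙ)
    (hcond : ℙ[ε | MeasurableSpace.comap (fun ω => (X ω, U ω)) inferInstance] =ᵐ[ℙ] 0)
    (hWmom : Integrable (fun ω => |X ω + U ω| ^ (2 * p)) ℙ)
    (hYmom : Integrable (fun ω => |g (X ω) + ε ω| * (1 + |X ω + U ω| ^ p)) ℙ)
    (hUmom : ∀ j ≤ 2 * p, Integrable (fun ω => |U ω| ^ j) ℙ)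
    (hXcont : ¬ ∃ S : Set ℝ, S.Countable ∧ Measure.map X ℙ Sᶜ = 0)
    (Xs Us es : ℕ → Ω → ℝ)
    (hXs : ∀ i, Measurable (Xs i)) (hUs : ∀ i, Measurable (Us i))
    (hes : ∀ i, Measurable (es i))
    (hiid : iIndepFun
      (fun i ω => (Xs i ω, Us i ω, es i ω)) ℙ)
    (hident : ∀ i, Measure.map (fun ω => (Xs i ω, Us i ω, es i ω)) ℙ
      = Measure.map (fun ω => (X ω, U ω, ε ω)) ℙ)
    (Ws Ys : ℕ → Ω → ℝ)
    (hWs : ∀ i ω, Ws i ω = Xs i ω + Us i ω)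
    (hYs : ∀ i ω, Ys i ω = g (Xs i ω) + es i ω)
    (ν : ℕ → ℝ) (hν : ∀ j, ν j = ∫ ω, (U ω) ^ j ∂ℙ)
    (P : ℕ → (ℕ → ℝ) → ℝ)
    (hP0 : ∀ x : ℕ → ℝ, P 0 x = (x 0)⁻¹)
    (hPrec : ∀ j : ℕ, 1 ≤ j → ∀ x : ℕ → ℝ,
      x 0 * P j x = -∑ k ∈ Finset.range j, (j.choose k : ℝ) * x (j - k) * P k x)
    (ahat Ahat bhat Bhat : ℕ → ℕ → Ω → ℝ)
    (hahat : ∀ j n ω, ahat j n ω = (n : ℝ)⁻¹ * ∑ k ∈ Finset.range n, (Ws k ω) ^ j)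
    (hAhat : ∀ j n ω, Ahat j n ω = (n : ℝ)⁻¹ * ∑ k ∈ Finset.range n, Ys k ω * (Ws k ω) ^ j)
    (hbhat : ∀ j n ω, bhat j n ω
      = ∑ k ∈ Finset.range (j + 1), (j.choose k : ℝ) * ahat (j - k) n ω * P k ν)
    (hBhat : ∀ j n ω, Bhat j n ω
      = ∑ k ∈ Finset.range (j + 1), (j.choose k : ℝ) * Ahat (j - k) n ω * P k ν)
    (Mhat : ℕ → Ω → Matrix (Fin (p + 1)) (Fin (p + 1)) ℝ)
    (hMhat : ∀ n ω j k, Mhat n ω j k = bhat ((j : ℕ) + (k : ℕ)) n ω)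
    (βhat : ℕ → Ω → Fin (p + 1) → ℝ)
    (hβhat : ∀ n ω, βhat n ω = (Mhat n ω)⁻¹.mulVec (fun j => Bhat (j : ℕ) n ω)) :
    TendstoInMeasure ℙ βhat atTop (fun _ => β0) := by
  classical
  -- abbreviations
  set W : Ω → ℝ := fun ω => X ω + U ω with hWdef
  set Y : Ω → ℝ := fun ω => g (X ω) + ε ω with hYdef
  have hgf : g = fun x => ∑ j : Fin (p + 1), β0 j * x ^ (j : ℕ) := funext hg
  have hgm : Measurable g := by
    rw [hgf]
    exact Finset.measurable_sum _ fun j _ => (measurable_id.pow_const _).const_mul _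
  have hWm : Measurable W := hX.add hU
  have hYm : Measurable Y := (hgm.comp hX).add hε
  -- moments
  set mx : ℕ → ℝ := fun j => ∫ ω, X ω ^ j ∂ℙ with hmx
  set ma : ℕ → ℝ := fun j => ∫ ω, W ω ^ j ∂ℙ with hma
  set mA : ℕ → ℝ := fun j => ∫ ω, Y ω * W ω ^ j ∂ℙ with hmA
  -- integrability of W powers
  have intW : ∀ j ≤ 2 * p, Integrable (fun ω => W ω ^ j) ℙ := by
    intro j hj
    refine Integrable.mono' ((integrable_const 1).add hWmom)
      (hWm.pow_const j).aestronglyMeasurable (Filter.Eventually.of_forall fun ω => ?_)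
    simp only [Real.norm_eq_abs, abs_pow, Pi.add_apply]
    exact aux_pow_le_one_add (abs_nonneg _) hj
  -- integrability of U powers
  have intU : ∀ j ≤ 2 * p, Integrable (fun ω => U ω ^ j) ℙ := by
    intro j hj
    refine Integrable.mono' (hUmom j hj) (hU.pow_const j).aestronglyMeasurable
      (Filter.Eventually.of_forall fun ω => ?_)
    simp [Real.norm_eq_abs, abs_pow]
  -- integrability of X powers
  have intXabs : Integrable (fun ω => |X ω| ^ (2 * p)) ℙ := by
    refine Integrable.mono'
      ((hWmom.add (hUmom (2 * p) le_rfl)).const_mul ((2 : ℝ) ^ (2 * p)))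
      (hX.abs.pow_const _).aestronglyMeasurable (Filter.Eventually.of_forall fun ω => ?_)
    have h1 : |X ω| ≤ |W ω| + |U ω| := by
      have : X ω = W ω - U ω := by simp [hWdef]
      rw [this]; exact abs_sub _ _
    have h2 : |X ω| ^ (2 * p) ≤ (|W ω| + |U ω|) ^ (2 * p) :=
      pow_le_pow_left₀ (abs_nonneg _) h1 _
    have h3 : (|W ω| + |U ω|) ^ (2 * p) ≤ 2 ^ (2 * p) * (|W ω| ^ (2 * p) + |U ω| ^ (2 * p)) := by
      calc (|W ω| + |U ω|) ^ (2 * p) ≤ (2 * max |W ω| |U ω|) ^ (2 * p) := by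
            refine pow_le_pow_left₀ (by positivity) ?_ _
            rcases le_total (|W ω|) (|U ω|) with h | h
            · rw [max_eq_right h]; nlinarith [abs_nonneg (U ω), abs_nonneg (W ω)]
            · rw [max_eq_left h]; nlinarith [abs_nonneg (U ω), abs_nonneg (W ω)]
      _ = 2 ^ (2 * p) * max |W ω| |U ω| ^ (2 * p) := by rw [mul_pow]
      _ ≤ 2 ^ (2 * p) * (|W ω| ^ (2 * p) + |U ω| ^ (2 * p)) := by
            gcongr
            rcases le_total (|W ω|) (|U ω|) with h | h
            · rw [max_eq_right h]; nlinarith [pow_nonneg (abs_nonneg (W ω)) (2*p)]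
            · rw [max_eq_left h]; nlinarith [pow_nonneg (abs_nonneg (U ω)) (2*p)]
    have : ‖|X ω| ^ (2*p)‖ = |X ω| ^ (2 * p) := by
      rw [Real.norm_eq_abs, abs_pow, abs_abs]
    rw [this]
    calc |X ω| ^ (2 * p) ≤ (|W ω| + |U ω|) ^ (2 * p) := h2
    _ ≤ 2 ^ (2 * p) * (|W ω| ^ (2 * p) + |U ω| ^ (2 * p)) := h3
    _ = (2:ℝ) ^ (2*p) * ((fun ω => |W ω| ^ (2*p)) ω + (fun ω => |U ω| ^ (2*p)) ω) := rfl
  have intX : ∀ j ≤ 2 * p, Integrable (fun ω => X ω ^ j) ℙ := by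
    intro j hj
    refine Integrable.mono' ((integrable_const 1).add intXabs)
      (hX.pow_const j).aestronglyMeasurable (Filter.Eventually.of_forall fun ω => ?_)
    simp only [Real.norm_eq_abs, abs_pow, Pi.add_apply]
    exact aux_pow_le_one_add (abs_nonneg _) hj
  -- independence and product moments
  have indXU : ∀ l m : ℕ, IndepFun (fun ω => X ω ^ l) (fun ω => U ω ^ m) ℙ :=
    fun l m => hindep.comp (measurable_id.pow_const l) (measurable_id.pow_const m)
  have intXU : ∀ l m, l ≤ 2 * p → m ≤ 2 * p →
      Integrable (fun ω => X ω ^ l * U ω ^ m) ℙ :=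
    fun l m hl hm => (indXU l m).integrable_mul (intX l hl) (intU m hm)
  have eXU : ∀ l m, l ≤ 2 * p → m ≤ 2 * p →
      ∫ ω, X ω ^ l * U ω ^ m ∂ℙ = mx l * ν m := by
    intro l m hl hm
    have h := (indXU l m).integral_mul_eq_mul_integral (intX l hl).aestronglyMeasurable
      (intU m hm).aestronglyMeasurable
    rw [hν m, hmx]
    simpa [Pi.mul_apply] using h
  -- expansion of E W^m
  have haconv : ∀ m, m ≤ 2 * p →
      ma m = ∑ l ∈ Finset.range (m + 1), (m.choose l : ℝ) * mx l * ν (m - l) := by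
    intro m hm
    have hexp : ∀ ω, W ω ^ m
        = ∑ l ∈ Finset.range (m + 1), X ω ^ l * U ω ^ (m - l) * (m.choose l : ℝ) := by
      intro ω
      rw [hWdef]
      exact add_pow (X ω) (U ω) m
    have : ma m = ∑ l ∈ Finset.range (m + 1), ∫ ω, X ω ^ l * U ω ^ (m - l) * (m.choose l : ℝ) ∂ℙ := by
      rw [hma]
      simp only [hexp]
      refine integral_finset_sum _ fun l hl => ?_
      rw [Finset.mem_range] at hl
      exact (intXU l (m - l) (by omega) (by omega)).mul_const _
    rw [this]
    refine Finset.sum_congr rfl fun l hl => ?_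
    rw [integral_mul_const, eXU l (m - l) (by { rw [Finset.mem_range] at hl; omega }) (by omega)]
    ring
  -- integrability of X^i W^m
  have intXW : ∀ i m, i + m ≤ 2 * p → Integrable (fun ω => X ω ^ i * W ω ^ m) ℙ := by
    intro i m him
    refine Integrable.mono' ((integrable_const 2).add (intXabs.add hWmom))
      ((hX.pow_const i).mul (hWm.pow_const m)).aestronglyMeasurable
      (Filter.Eventually.of_forall fun ω => ?_)
    have h1 : ‖X ω ^ i * W ω ^ m‖ = |X ω| ^ i * |W ω| ^ m := by
      rw [Real.norm_eq_abs, abs_mul, abs_pow, abs_pow]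
    rw [h1]
    calc |X ω| ^ i * |W ω| ^ m ≤ |X ω| ^ (i + m) + |W ω| ^ (i + m) :=
          aux_pow_mul_pow_le (abs_nonneg _) (abs_nonneg _) i m
    _ ≤ (1 + |X ω| ^ (2 * p)) + (1 + |W ω| ^ (2 * p)) := by
          exact add_le_add (aux_pow_le_one_add (abs_nonneg _) him)
            (aux_pow_le_one_add (abs_nonneg _) him)
    _ = 2 + ((fun ω => |X ω| ^ (2 * p)) ω + (fun ω => |W ω| ^ (2 * p)) ω) := by ring
  -- expansion of E X^i W^m
  have hXW : ∀ i m, i + m ≤ 2 * p →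
      ∫ ω, X ω ^ i * W ω ^ m ∂ℙ
        = ∑ l ∈ Finset.range (m + 1), (m.choose l : ℝ) * mx (i + l) * ν (m - l) := by
    intro i m him
    have hexp : ∀ ω, X ω ^ i * W ω ^ m
        = ∑ l ∈ Finset.range (m + 1), X ω ^ (i + l) * U ω ^ (m - l) * (m.choose l : ℝ) := by
      intro ω
      rw [hWdef]
      show X ω ^ i * (X ω + U ω) ^ m = _
      rw [add_pow, Finset.mul_sum]
      refine Finset.sum_congr rfl fun l hl => ?_
      rw [pow_add]
      ring
    have : ∫ ω, X ω ^ i * W ω ^ m ∂ℙ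
        = ∑ l ∈ Finset.range (m + 1), ∫ ω, X ω ^ (i + l) * U ω ^ (m - l) * (m.choose l : ℝ) ∂ℙ := by
      simp only [hexp]
      refine integral_finset_sum _ fun l hl => ?_
      rw [Finset.mem_range] at hl
      exact (intXU (i + l) (m - l) (by omega) (by omega)).mul_const _
    rw [this]
    refine Finset.sum_congr rfl fun l hl => ?_
    rw [Finset.mem_range] at hl
    rw [integral_mul_const, eXU (i + l) (m - l) (by omega) (by omega)]
    ring
  -- Y-side integrability
  have intY : Integrable Y ℙ := by
    refine Integrable.mono' hYmom hYm.aestronglyMeasurable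
      (Filter.Eventually.of_forall fun ω => ?_)
    have h1 : ‖Y ω‖ = |g (X ω) + ε ω| := by rw [hYdef, Real.norm_eq_abs]
    rw [h1]
    have : (0:ℝ) ≤ |X ω + U ω| ^ p := by positivity
    nlinarith [abs_nonneg (g (X ω) + ε ω)]
  have intYW : ∀ m, m ≤ p → Integrable (fun ω => Y ω * W ω ^ m) ℙ := by
    intro m hm
    refine Integrable.mono' hYmom (hYm.mul (hWm.pow_const m)).aestronglyMeasurable
      (Filter.Eventually.of_forall fun ω => ?_)
    have h1 : ‖Y ω * W ω ^ m‖ = |g (X ω) + ε ω| * |X ω + U ω| ^ m := by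
      rw [Real.norm_eq_abs, abs_mul, abs_pow, hYdef, hWdef]
    rw [h1]
    have h2 : |X ω + U ω| ^ m ≤ 1 + |X ω + U ω| ^ p :=
      aux_pow_le_one_add (abs_nonneg _) hm
    exact mul_le_mul_of_nonneg_left h2 (abs_nonneg _)
  have intgXW : ∀ m, m ≤ p → Integrable (fun ω => g (X ω) * W ω ^ m) ℙ := by
    intro m hm
    have heq : (fun ω => g (X ω) * W ω ^ m)
        = fun ω => ∑ i : Fin (p + 1), β0 i * (X ω ^ (i : ℕ) * W ω ^ m) := by
      funext ω
      rw [hg (X ω), Finset.sum_mul]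
      exact Finset.sum_congr rfl fun i _ => by ring
    rw [heq]
    exact integrable_finset_sum _ fun i _ =>
      ((intXW (i : ℕ) m (by have := i.isLt; omega)).const_mul _)
  have intεW : ∀ m, m ≤ p → Integrable (fun ω => ε ω * W ω ^ m) ℙ := by
    intro m hm
    have heq : (fun ω => ε ω * W ω ^ m)
        = fun ω => Y ω * W ω ^ m - g (X ω) * W ω ^ m := by
      funext ω
      simp only [hYdef]
      ring
    rw [heq]
    exact (intYW m hm).sub (intgXW m hm)
  -- E[ε W^m] = 0 via conditional expectation
  have hεW0 : ∀ m, m ≤ p → ∫ ω, ε ω * W ω ^ m ∂ℙ = 0 := by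
    intro m hm
    have hmle : MeasurableSpace.comap (fun ω => (X ω, U ω)) inferInstance
        ≤ (by infer_instance : MeasurableSpace Ω) := (hX.prodMk hU).comap_le
    have hpair : Measurable[MeasurableSpace.comap (fun ω => (X ω, U ω)) inferInstance]
        (fun ω => (X ω, U ω)) := measurable_iff_comap_le.mpr le_rfl
    have hWsm : StronglyMeasurable[MeasurableSpace.comap (fun ω => (X ω, U ω)) inferInstance]
        (fun ω => W ω ^ m) := by
      have h2 : Measurable[MeasurableSpace.comap (fun ω => (X ω, U ω)) inferInstance]
          (fun ω => W ω ^ m) := by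
        have h1 : (fun ω => W ω ^ m)
            = (fun q : ℝ × ℝ => (q.1 + q.2) ^ m) ∘ (fun ω => (X ω, U ω)) := by
          funext ω; simp [hWdef]
        rw [h1]
        exact (((measurable_fst.add measurable_snd).pow_const m)).comp hpair
      exact h2.stronglyMeasurable
    have hprod : Integrable ((fun ω => W ω ^ m) * ε) ℙ := by
      have : ((fun ω => W ω ^ m) * ε) = fun ω => ε ω * W ω ^ m := by
        funext ω; simp [mul_comm]
      rw [this]
      exact intεW m hm
    have intε : Integrable ε ℙ := by
      have heq : ε = fun ω => Y ω * W ω ^ 0 - g (X ω) * W ω ^ 0 := by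
        funext ω; simp only [hYdef]; ring
      rw [heq]
      exact (intYW 0 (Nat.zero_le _)).sub (intgXW 0 (Nat.zero_le _))
    have hce := condExp_mul_of_stronglyMeasurable_left (μ := ℙ) hWsm hprod intε
    have h0 : ℙ[(fun ω => W ω ^ m) * ε |
        MeasurableSpace.comap (fun ω => (X ω, U ω)) inferInstance] =ᵐ[ℙ] 0 := by
      refine hce.trans ?_
      filter_upwards [hcond] with ω hω
      simp only [Pi.mul_apply, Pi.zero_apply, hω, mul_zero]
    have hint := integral_condExp hmle (f := (fun ω => W ω ^ m) * ε) (μ := ℙ)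
    have h1 : ∫ ω, ((fun ω => W ω ^ m) * ε) ω ∂ℙ = 0 := by
      rw [← hint, integral_congr_ae h0]
      simp
    have h3 : ∫ ω, ε ω * W ω ^ m ∂ℙ = ∫ ω, ((fun ω => W ω ^ m) * ε) ω ∂ℙ := by
      congr 1; funext ω; simp [mul_comm]
    rw [h3, h1]
  -- expansion of E Y W^m
  have hAconv : ∀ m, m ≤ p →
      mA m = ∑ i : Fin (p + 1), β0 i * ∫ ω, X ω ^ (i : ℕ) * W ω ^ m ∂ℙ := by
    intro m hm
    have hsplit : ∀ ω, Y ω * W ω ^ m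
        = (∑ i : Fin (p + 1), β0 i * (X ω ^ (i : ℕ) * W ω ^ m)) + ε ω * W ω ^ m := by
      intro ω
      have h1 : Y ω * W ω ^ m = g (X ω) * W ω ^ m + ε ω * W ω ^ m := by
        simp only [hYdef]; ring
      rw [h1, hg (X ω), Finset.sum_mul]
      congr 1
      exact Finset.sum_congr rfl fun i _ => by ring
    have h2 : mA m = (∫ ω, ∑ i : Fin (p + 1), β0 i * (X ω ^ (i : ℕ) * W ω ^ m) ∂ℙ)
        + ∫ ω, ε ω * W ω ^ m ∂ℙ := by
      rw [hmA]
      simp only [hsplit]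
      exact integral_add
        (integrable_finset_sum _ fun i _ =>
          ((intXW (i : ℕ) m (by have := i.isLt; omega)).const_mul _))
        (intεW m hm)
    have h4 : ∫ ω, ∑ i : Fin (p + 1), β0 i * (X ω ^ (i : ℕ) * W ω ^ m) ∂ℙ
        = ∑ i : Fin (p + 1), ∫ ω, β0 i * (X ω ^ (i : ℕ) * W ω ^ m) ∂ℙ :=
      integral_finset_sum _ fun i _ =>
        ((intXW (i : ℕ) m (by have := i.isLt; omega)).const_mul _)
    rw [h2, hεW0 m hm, add_zero, h4]
    exact Finset.sum_congr rfl fun i _ => integral_const_mul _ _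
  -- binomial-inverse machinery
  have hν0 : ν 0 = 1 := by rw [hν 0]; simp
  have hdelta := aux_binom_inv ν P hν0 (hP0 ν) (fun j hj => hPrec j hj ν)
  have hbL : ∀ j, j ≤ 2 * p →
      ∑ k ∈ Finset.range (j + 1), (j.choose k : ℝ) * ma (j - k) * P k ν = mx j := by
    intro j hj
    exact aux_conv_inv ν P mx ma j (fun i => hdelta i)
      (fun m hm => haconv m (le_trans hm hj))
  have hBL : ∀ j, j ≤ p →
      ∑ k ∈ Finset.range (j + 1), (j.choose k : ℝ) * mA (j - k) * P k ν
        = ∑ i : Fin (p + 1), β0 i * mx ((i : ℕ) + j) := by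
    intro j hj
    have h1 : ∀ k ∈ Finset.range (j + 1),
        (j.choose k : ℝ) * mA (j - k) * P k ν
          = ∑ i : Fin (p + 1),
              β0 i * ((j.choose k : ℝ) * (∫ ω, X ω ^ (i : ℕ) * W ω ^ (j - k) ∂ℙ) * P k ν) := by
      intro k hk
      rw [hAconv (j - k) (le_trans (Nat.sub_le _ _) hj), Finset.mul_sum, Finset.sum_mul]
      exact Finset.sum_congr rfl fun i _ => by ring
    rw [Finset.sum_congr rfl h1, Finset.sum_comm]
    refine Finset.sum_congr rfl fun i _ => ?_
    rw [← Finset.mul_sum]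
    congr 1
    exact aux_conv_inv ν P (fun l => mx ((i : ℕ) + l))
      (fun m => ∫ ω, X ω ^ (i : ℕ) * W ω ^ m ∂ℙ) j (fun i => hdelta i)
      (fun m hm => hXW (i : ℕ) m (by have := i.isLt; omega))
  -- the limiting moment matrix
  set Mlim : Matrix (Fin (p + 1)) (Fin (p + 1)) ℝ
    := Matrix.of (fun j k => mx ((j : ℕ) + (k : ℕ))) with hMlim
  have hquad : ∀ v : Fin (p + 1) → ℝ,
      ∫ ω, (∑ i : Fin (p + 1), v i * X ω ^ (i : ℕ)) ^ 2 ∂ℙ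
        = dotProduct v (Mlim.mulVec v) := by
    intro v
    have hexp : ∀ ω, (∑ i : Fin (p + 1), v i * X ω ^ (i : ℕ)) ^ 2
        = ∑ i : Fin (p + 1), ∑ k : Fin (p + 1),
            v i * v k * X ω ^ ((i : ℕ) + (k : ℕ)) := by
      intro ω
      rw [sq, Finset.sum_mul_sum]
      exact Finset.sum_congr rfl fun i _ => Finset.sum_congr rfl fun k _ => by
        rw [pow_add]; ring
    have h2 : ∫ ω, (∑ i : Fin (p + 1), v i * X ω ^ (i : ℕ)) ^ 2 ∂ℙ
        = ∑ i : Fin (p + 1), ∑ k : Fin (p + 1), v i * v k * mx ((i : ℕ) + (k : ℕ)) := by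
      simp only [hexp]
      have e1 : ∫ ω, ∑ i : Fin (p + 1), ∑ k : Fin (p + 1),
            v i * v k * X ω ^ ((i : ℕ) + (k : ℕ)) ∂ℙ
          = ∑ i : Fin (p + 1), ∫ ω, ∑ k : Fin (p + 1),
              v i * v k * X ω ^ ((i : ℕ) + (k : ℕ)) ∂ℙ :=
        integral_finset_sum _ fun i _ => integrable_finset_sum _ fun k _ =>
          ((intX ((i : ℕ) + (k : ℕ)) (by have := i.isLt; have := k.isLt; omega)).const_mul _)
      rw [e1]
      refine Finset.sum_congr rfl fun i _ => ?_
      have e2 : ∫ ω, ∑ k : Fin (p + 1), v i * v k * X ω ^ ((i : ℕ) + (k : ℕ)) ∂ℙ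
          = ∑ k : Fin (p + 1), ∫ ω, v i * v k * X ω ^ ((i : ℕ) + (k : ℕ)) ∂ℙ :=
        integral_finset_sum _ fun k _ =>
          ((intX ((i : ℕ) + (k : ℕ)) (by have := i.isLt; have := k.isLt; omega)).const_mul _)
      rw [e2]
      exact Finset.sum_congr rfl fun k _ => integral_const_mul _ _
    rw [h2]
    simp only [dotProduct, Matrix.mulVec, hMlim, Matrix.of_apply, Finset.mul_sum]
    exact Finset.sum_congr rfl fun i _ => Finset.sum_congr rfl fun k _ => by ring
  have hdet : Mlim.det ≠ 0 := by
    intro hdet0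
    obtain ⟨v, hv0, hMv⟩ := (Matrix.exists_mulVec_eq_zero_iff (M := Mlim)).mpr hdet0
    have hq0 : ∫ ω, (∑ i : Fin (p + 1), v i * X ω ^ (i : ℕ)) ^ 2 ∂ℙ = 0 := by
      rw [hquad v, hMv, dotProduct_zero]
    have hint2 : Integrable (fun ω => (∑ i : Fin (p + 1), v i * X ω ^ (i : ℕ)) ^ 2) ℙ := by
      have hexp : (fun ω => (∑ i : Fin (p + 1), v i * X ω ^ (i : ℕ)) ^ 2)
          = fun ω => ∑ i : Fin (p + 1), ∑ k : Fin (p + 1),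
              v i * v k * X ω ^ ((i : ℕ) + (k : ℕ)) := by
        funext ω
        rw [sq, Finset.sum_mul_sum]
        exact Finset.sum_congr rfl fun i _ => Finset.sum_congr rfl fun k _ => by
          rw [pow_add]; ring
      rw [hexp]
      exact integrable_finset_sum _ fun i _ => integrable_finset_sum _ fun k _ =>
        ((intX ((i : ℕ) + (k : ℕ)) (by have := i.isLt; have := k.isLt; omega)).const_mul _)
    have hae : ∀ᵐ ω ∂ℙ, (∑ i : Fin (p + 1), v i * X ω ^ (i : ℕ)) ^ 2 = 0 := by
      have h3 := (integral_eq_zero_iff_of_nonneg (fun ω => sq_nonneg _) hint2).mp hq0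
      filter_upwards [h3] with ω hω
      exact hω
    obtain ⟨i0, hi0⟩ : ∃ i0, v i0 ≠ 0 := Function.ne_iff.mp hv0
    set q : Polynomial ℝ := ∑ i : Fin (p + 1), Polynomial.C (v i) * Polynomial.X ^ (i : ℕ)
      with hqdef
    have hqne : q ≠ 0 := by
      intro h0
      have hc : q.coeff (i0 : ℕ) = v i0 := by
        rw [hqdef, Polynomial.finset_sum_coeff, Finset.sum_eq_single i0]
        · simp [Polynomial.coeff_C_mul, Polynomial.coeff_X_pow]
        · intro i _ hii
          simp only [Polynomial.coeff_C_mul, Polynomial.coeff_X_pow]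
          rw [if_neg, mul_zero]
          intro hval
          exact hii (Fin.ext hval.symm)
        · intro hmem
          exact absurd (Finset.mem_univ i0) hmem
      rw [h0, Polynomial.coeff_zero] at hc
      exact hi0 hc.symm
    have heval : ∀ t, q.eval t = ∑ i : Fin (p + 1), v i * t ^ (i : ℕ) := by
      intro t
      rw [hqdef, Polynomial.eval_finset_sum]
      simp
    have hroots : {t : ℝ | q.IsRoot t}.Finite := Polynomial.finite_setOf_isRoot hqne
    have hSm : MeasurableSet {t : ℝ | q.IsRoot t} := hroots.measurableSet
    have haeS : ∀ᵐ ω ∂ℙ, X ω ∈ {t : ℝ | q.IsRoot t} := by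
      filter_upwards [hae] with ω hω
      have h5 : ∑ i : Fin (p + 1), v i * X ω ^ (i : ℕ) = 0 := by
        exact pow_eq_zero_iff (n := 2) (by norm_num) |>.mp hω
      show q.IsRoot (X ω)
      rw [Polynomial.IsRoot, heval]
      exact h5
    have hmap : Measure.map X ℙ {t : ℝ | q.IsRoot t}ᶜ = 0 := by
      rw [Measure.map_apply hX hSm.compl]
      have := haeS
      rw [ae_iff] at this
      convert this using 2
      rfl
    exact hXcont ⟨{t : ℝ | q.IsRoot t}, hroots.countable, hmap⟩
  -- strong law master lemma
  have master : ∀ φ : ℝ × ℝ × ℝ → ℝ, Measurable φ →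
      Integrable (fun ω => φ (X ω, U ω, ε ω)) ℙ →
      ∀ᵐ ω ∂ℙ, Tendsto
        (fun n : ℕ => (n : ℝ)⁻¹ * ∑ i ∈ Finset.range n, φ (Xs i ω, Us i ω, es i ω))
        atTop (𝓝 (∫ ω, φ (X ω, U ω, ε ω) ∂ℙ)) := by
    intro φ hφ hφint
    have hT : ∀ i, Measurable (fun ω => (Xs i ω, Us i ω, es i ω)) :=
      fun i => (hXs i).prodMk ((hUs i).prodMk (hes i))
    have hT0 : Measurable (fun ω => (X ω, U ω, ε ω)) := hX.prodMk (hU.prodMk hε)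
    have hid : ∀ i, IdentDistrib (fun ω => φ (Xs i ω, Us i ω, es i ω))
        (fun ω => φ (X ω, U ω, ε ω)) ℙ ℙ := by
      intro i
      have h1 : IdentDistrib (fun ω => (Xs i ω, Us i ω, es i ω))
          (fun ω => (X ω, U ω, ε ω)) ℙ ℙ :=
        ⟨(hT i).aemeasurable, hT0.aemeasurable, hident i⟩
      exact h1.comp hφ
    have hint0 : Integrable (fun ω => φ (Xs 0 ω, Us 0 ω, es 0 ω)) ℙ :=
      (hid 0).integrable_iff.mpr hφint
    have hindep' : Pairwise (Function.onFun (IndepFun · · ℙ) fun i ω => φ (Xs i ω, Us i ω, es i ω)) :=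
      fun i j hij => (hiid.indepFun hij).comp hφ hφ
    have hident' : ∀ i, IdentDistrib (fun ω => φ (Xs i ω, Us i ω, es i ω))
        (fun ω => φ (Xs 0 ω, Us 0 ω, es 0 ω)) ℙ ℙ := fun i => (hid i).trans (hid 0).symm
    have hlln := strong_law_ae_real _ hint0 hindep' hident'
    have hmean : (ℙ[fun ω => φ (Xs 0 ω, Us 0 ω, es 0 ω)]) = ∫ ω, φ (X ω, U ω, ε ω) ∂ℙ :=
      (hid 0).integral_eq
    filter_upwards [hlln] with ω hω
    rw [hmean] at hω
    have heq : (fun n : ℕ => (n : ℝ)⁻¹ * ∑ i ∈ Finset.range n, φ (Xs i ω, Us i ω, es i ω))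
        = fun n : ℕ => (∑ i ∈ Finset.range n, φ (Xs i ω, Us i ω, es i ω)) / n := by
      funext n
      rw [div_eq_inv_mul]
    rw [heq]
    exact hω
  -- apply the strong law to all needed statistics
  have convA : ∀ᵐ ω ∂ℙ,
      (∀ j : Fin (2 * p + 1), Tendsto (fun n => ahat (j : ℕ) n ω) atTop (𝓝 (ma (j : ℕ))))
      ∧ (∀ j : Fin (p + 1), Tendsto (fun n => Ahat (j : ℕ) n ω) atTop (𝓝 (mA (j : ℕ)))) := by
    refine Filter.Eventually.and ?_ ?_
    · rw [MeasureTheory.ae_all_iff]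
      intro j
      have hjle : (j : ℕ) ≤ 2 * p := by have := j.isLt; omega
      have hmeasφ : Measurable (fun q : ℝ × ℝ × ℝ => (q.1 + q.2.1) ^ (j : ℕ)) :=
        (measurable_fst.add measurable_snd.fst).pow_const _
      have hintφ : Integrable (fun ω => (X ω + U ω) ^ (j : ℕ)) ℙ := intW (j : ℕ) hjle
      have h := master (fun q => (q.1 + q.2.1) ^ (j : ℕ)) hmeasφ hintφ
      filter_upwards [h] with ω hω
      have heq : (fun n => ahat (j : ℕ) n ω)
          = fun n : ℕ => (n : ℝ)⁻¹ * ∑ i ∈ Finset.range n, (Xs i ω + Us i ω) ^ (j : ℕ) := by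
        funext n
        rw [hahat]
        congr 1
        exact Finset.sum_congr rfl fun k _ => by rw [hWs]
      rw [heq]
      exact hω
    · rw [MeasureTheory.ae_all_iff]
      intro j
      have hjle : (j : ℕ) ≤ p := by have := j.isLt; omega
      have hmeasφ : Measurable
          (fun q : ℝ × ℝ × ℝ => (g q.1 + q.2.2) * (q.1 + q.2.1) ^ (j : ℕ)) :=
        ((hgm.comp measurable_fst).add measurable_snd.snd).mul
          ((measurable_fst.add measurable_snd.fst).pow_const _)
      have hintφ : Integrable (fun ω => (g (X ω) + ε ω) * (X ω + U ω) ^ (j : ℕ)) ℙ :=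
        intYW (j : ℕ) hjle
      have h := master (fun q => (g q.1 + q.2.2) * (q.1 + q.2.1) ^ (j : ℕ)) hmeasφ hintφ
      filter_upwards [h] with ω hω
      have heq : (fun n => Ahat (j : ℕ) n ω)
          = fun n : ℕ => (n : ℝ)⁻¹ * ∑ i ∈ Finset.range n,
              (g (Xs i ω) + es i ω) * (Xs i ω + Us i ω) ^ (j : ℕ) := by
        funext n
        rw [hAhat]
        congr 1
        exact Finset.sum_congr rfl fun k _ => by rw [hWs, hYs]
      rw [heq]
      exact hω
  -- almost-everywhere convergence of the estimator
  have convβ : ∀ᵐ ω ∂ℙ, Tendsto (fun n => βhat n ω) atTop (𝓝 β0) := by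
    filter_upwards [convA] with ω hω
    obtain ⟨h1, h2⟩ := hω
    have hb : ∀ j, j ≤ 2 * p → Tendsto (fun n => bhat j n ω) atTop (𝓝 (mx j)) := by
      intro j hj
      have heq : (fun n => bhat j n ω) = fun n =>
          ∑ k ∈ Finset.range (j + 1), (j.choose k : ℝ) * ahat (j - k) n ω * P k ν := by
        funext n; rw [hbhat]
      rw [heq, ← hbL j hj]
      refine tendsto_finset_sum _ fun k hk => ?_
      have h3 := h1 ⟨j - k, by omega⟩
      exact (h3.const_mul _).mul_const _
    have hB2 : ∀ j : Fin (p + 1), Tendsto (fun n => Bhat (j : ℕ) n ω) atTop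
        (𝓝 (∑ i : Fin (p + 1), β0 i * mx ((i : ℕ) + (j : ℕ)))) := by
      intro j
      have heq : (fun n => Bhat (j : ℕ) n ω) = fun n =>
          ∑ k ∈ Finset.range ((j : ℕ) + 1), ((j : ℕ).choose k : ℝ) * Ahat ((j : ℕ) - k) n ω * P k ν := by
        funext n; rw [hBhat]
      rw [heq, ← hBL (j : ℕ) (by have := j.isLt; omega)]
      refine tendsto_finset_sum _ fun k hk => ?_
      have h3 := h2 ⟨(j : ℕ) - k, by have := j.isLt; omega⟩
      exact (h3.const_mul _).mul_const _
    have hMconv : Tendsto (fun n => Mhat n ω) atTop (𝓝 Mlim) := by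
      refine tendsto_pi_nhds.mpr ?_
      intro j
      rw [tendsto_pi_nhds]
      intro k
      have heq : (fun n => Mhat n ω j k) = fun n => bhat ((j : ℕ) + (k : ℕ)) n ω := by
        funext n; rw [hMhat]
      rw [heq]
      have : Mlim j k = mx ((j : ℕ) + (k : ℕ)) := rfl
      rw [this]
      exact hb _ (by have := j.isLt; have := k.isLt; omega)
    have hdetconv : Tendsto (fun n => (Mhat n ω).det) atTop (𝓝 Mlim.det) :=
      ((continuous_id.matrix_det).tendsto Mlim).comp hMconv
    have hadjconv : Tendsto (fun n => (Mhat n ω).adjugate) atTop (𝓝 Mlim.adjugate) :=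
      ((continuous_id.matrix_adjugate).tendsto Mlim).comp hMconv
    have hinvconv : Tendsto (fun n => (Mhat n ω)⁻¹) atTop (𝓝 Mlim⁻¹) := by
      simp only [Matrix.inv_def, Ring.inverse_eq_inv']
      exact Filter.Tendsto.smul (hdetconv.inv₀ hdet) hadjconv
    have hβ0 : Mlim⁻¹.mulVec (Mlim.mulVec β0) = β0 := by
      rw [Matrix.mulVec_mulVec, Matrix.nonsing_inv_mul Mlim (isUnit_iff_ne_zero.mpr hdet),
        Matrix.one_mulVec]
    have hMv : ∀ j : Fin (p + 1),
        (Mlim.mulVec β0) j = ∑ i : Fin (p + 1), β0 i * mx ((i : ℕ) + (j : ℕ)) := by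
      intro j
      simp only [Matrix.mulVec, dotProduct, hMlim, Matrix.of_apply]
      exact Finset.sum_congr rfl fun i _ => by rw [Nat.add_comm]; ring
    rw [tendsto_pi_nhds]
    intro j
    have hcomp : (fun n => βhat n ω j) = fun n =>
        ∑ k : Fin (p + 1), (Mhat n ω)⁻¹ j k * Bhat (k : ℕ) n ω := by
      funext n
      rw [hβhat]
      simp [Matrix.mulVec, dotProduct]
    rw [hcomp]
    have hlim : β0 j = ∑ k : Fin (p + 1),
        Mlim⁻¹ j k * (∑ i : Fin (p + 1), β0 i * mx ((i : ℕ) + (k : ℕ))) := by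
      calc β0 j = (Mlim⁻¹.mulVec (Mlim.mulVec β0)) j := by rw [hβ0]
      _ = ∑ k : Fin (p + 1), Mlim⁻¹ j k * (Mlim.mulVec β0) k := rfl
      _ = ∑ k : Fin (p + 1),
            Mlim⁻¹ j k * (∑ i : Fin (p + 1), β0 i * mx ((i : ℕ) + (k : ℕ))) :=
        Finset.sum_congr rfl fun k _ => by rw [hMv k]
    rw [hlim]
    refine tendsto_finset_sum _ fun k _ => ?_
    refine Tendsto.mul ?_ (hB2 k)
    exact tendsto_pi_nhds.mp (tendsto_pi_nhds.mp hinvconv j) k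
  -- measurability of the estimator
  have hβmeas : ∀ n, AEStronglyMeasurable (βhat n) ℙ := by
    intro n
    have hWsm' : ∀ k, Measurable (Ws k) := by
      intro k
      have : Ws k = fun ω => Xs k ω + Us k ω := funext (hWs k)
      rw [this]; exact (hXs k).add (hUs k)
    have hYsm' : ∀ k, Measurable (Ys k) := by
      intro k
      have : Ys k = fun ω => g (Xs k ω) + es k ω := funext (hYs k)
      rw [this]; exact (hgm.comp (hXs k)).add (hes k)
    have hahatm : ∀ j, Measurable (fun ω => ahat j n ω) := by
      intro j
      have heq : (fun ω => ahat j n ω)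
          = fun ω => (n : ℝ)⁻¹ * ∑ k ∈ Finset.range n, (Ws k ω) ^ j := by
        funext ω; rw [hahat]
      rw [heq]
      exact (Finset.measurable_sum _ fun k _ => (hWsm' k).pow_const _).const_mul _
    have hAhatm : ∀ j, Measurable (fun ω => Ahat j n ω) := by
      intro j
      have heq : (fun ω => Ahat j n ω)
          = fun ω => (n : ℝ)⁻¹ * ∑ k ∈ Finset.range n, Ys k ω * (Ws k ω) ^ j := by
        funext ω; rw [hAhat]
      rw [heq]
      exact (Finset.measurable_sum _ fun k _ =>
        (hYsm' k).mul ((hWsm' k).pow_const _)).const_mul _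
    have hbhatm : ∀ j, Measurable (fun ω => bhat j n ω) := by
      intro j
      have heq : (fun ω => bhat j n ω) = fun ω =>
          ∑ k ∈ Finset.range (j + 1), (j.choose k : ℝ) * ahat (j - k) n ω * P k ν := by
        funext ω; rw [hbhat]
      rw [heq]
      exact Finset.measurable_sum _ fun k _ => ((hahatm (j - k)).const_mul _).mul_const _
    have hBhatm : ∀ j, Measurable (fun ω => Bhat j n ω) := by
      intro j
      have heq : (fun ω => Bhat j n ω) = fun ω =>
          ∑ k ∈ Finset.range (j + 1), (j.choose k : ℝ) * Ahat (j - k) n ω * P k ν := by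
        funext ω; rw [hBhat]
      rw [heq]
      exact Finset.measurable_sum _ fun k _ => ((hAhatm (j - k)).const_mul _).mul_const _
    have hMem : ∀ j k : Fin (p + 1), Measurable (fun ω => Mhat n ω j k) := by
      intro j k
      have heq : (fun ω => Mhat n ω j k) = fun ω => bhat ((j : ℕ) + (k : ℕ)) n ω := by
        funext ω; rw [hMhat]
      rw [heq]
      exact hbhatm _
    have hdetgen : ∀ F : Ω → Matrix (Fin (p + 1)) (Fin (p + 1)) ℝ,
        (∀ j k, Measurable fun ω => F ω j k) → Measurable fun ω => (F ω).det := by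
      intro F hF
      simp_rw [Matrix.det_apply]
      refine Finset.measurable_sum _ fun σ _ => ?_
      refine Measurable.const_smul ?_ _
      exact Finset.measurable_prod _ fun i _ => hF _ _
    have hdetm : Measurable (fun ω => (Mhat n ω).det) := hdetgen (Mhat n) hMem
    have hadjem : ∀ j k : Fin (p + 1), Measurable (fun ω => (Mhat n ω).adjugate j k) := by
      intro j k
      simp_rw [Matrix.adjugate_apply]
      refine hdetgen _ ?_
      intro a b
      by_cases hak : a = k
      · subst hak
        simp only [Matrix.updateRow_self]
        exact measurable_const
      · simp only [Matrix.updateRow_ne hak]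
        exact hMem a b
    have hinvm : ∀ j k : Fin (p + 1), Measurable (fun ω => (Mhat n ω)⁻¹ j k) := by
      intro j k
      simp only [Matrix.inv_def, Ring.inverse_eq_inv', Matrix.smul_apply, smul_eq_mul]
      exact (hdetm.inv).mul (hadjem j k)
    have hm : Measurable (βhat n) := by
      refine measurable_pi_lambda _ fun j => ?_
      have heq : (fun ω => βhat n ω j) = fun ω =>
          ∑ k : Fin (p + 1), (Mhat n ω)⁻¹ j k * Bhat (k : ℕ) n ω := by
        funext ω
        rw [hβhat]
        simp [Matrix.mulVec, dotProduct]
      rw [heq]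
      exact Finset.measurable_sum _ fun k _ => (hinvm j k).mul (hBhatm (k : ℕ))
    exact hm.aestronglyMeasurable
  exact tendstoInMeasure_of_tendsto_ae hβmeas convβ
end

section
/- In the errors-in-variables model, suppose E|g(X)| < ∞ and E(|ε|) < ∞. Then for every t ∈ ℝ, E(Y e^{itW}) = E(g(X) e^{itX}) · f_U^{Ft}(t). Consequently, whenever f_U^{Ft}(t) ≠ 0, the estimator ψ̂(t) = (n f_U^{Ft}(t))^{−1} Σ_{j=1}^{n} Y_j e^{itW_j}, computed from i.i.d. copies (W_j, Y_j) of (W, Y), is an unbiased estimator of ψ(t) = E(g(X) e^{itX}). -/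
open MeasureTheory ProbabilityTheory Complex

/-- In the errors-in-variables model, if `E|g(X)| < ∞` and `E|ε| < ∞`,
then `E(Y e^{itW}) = E(g(X) e^{itX}) f_U^{Ft}(t)` for every `t`. Consequently,
whenever `f_U^{Ft}(t) ≠ 0`, the estimator
`ψ̂(t) = (n f_U^{Ft}(t))⁻¹ ∑_{j=1}^n Y_j e^{itW_j}`, computed from i.i.d. copies
`(W_j, Y_j)` of `(W, Y)`, is unbiased for `ψ(t) = E(g(X) e^{itX})`. -/
theorem statement6
    {Ω : Type*} [MeasureSpace Ω] [IsProbabilityMeasure (ℙ : Measure Ω)]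
    (X U ε : Ω → ℝ) (g : ℝ → ℝ)
    (hX : Measurable X) (hU : Measurable U) (hε : Measurable ε) (hg : Measurable g)
    (hindep : IndepFun X U ℙ)
    (hcond : ℙ[ε | MeasurableSpace.comap (fun ω => (X ω, U ω)) inferInstance] =ᵐ[ℙ] 0)
    (hgint : Integrable (fun ω => |g (X ω)|) ℙ)
    (hεint : Integrable (fun ω => |ε ω|) ℙ)
    (Y W : Ω → ℝ) (hY : ∀ ω, Y ω = g (X ω) + ε ω) (hW : ∀ ω, W ω = X ω + U ω)
    (fUFt : ℝ → ℂ) (hfUFt : ∀ t, fUFt t = ∫ ω, Complex.exp (Complex.I * t * U ω) ∂ℙ)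
    (ψ : ℝ → ℂ) (hψ : ∀ t, ψ t = ∫ ω, (g (X ω) : ℂ) * Complex.exp (Complex.I * t * X ω) ∂ℙ)
    (Ws Ys : ℕ → Ω → ℝ)
    (hWsmeas : ∀ j, Measurable (Ws j)) (hYsmeas : ∀ j, Measurable (Ys j))
    (hiid : ∀ j, Measure.map (fun ω => (Ws j ω, Ys j ω)) ℙ
              = Measure.map (fun ω => (W ω, Y ω)) ℙ) :
    (∀ t : ℝ,
      (∫ ω, (Y ω : ℂ) * Complex.exp (Complex.I * t * W ω) ∂ℙ) = ψ t * fUFt t) ∧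
    (∀ t : ℝ, fUFt t ≠ 0 → ∀ n : ℕ, 1 ≤ n →
      (∫ ω, ((n : ℂ) * fUFt t)⁻¹
          * ∑ j ∈ Finset.range n, (Ys j ω : ℂ) * Complex.exp (Complex.I * t * Ws j ω) ∂ℙ)
        = ψ t) := by

  -- basic measurability / integrability facts
  have hεint' : Integrable ε ℙ := by
    rw [← integrable_norm_iff hε.aestronglyMeasurable]
    simpa [Real.norm_eq_abs] using hεint
  have hWm : Measurable W := by
    have : W = fun ω => X ω + U ω := funext hW
    rw [this]; exact hX.add hU
  have hYm : Measurable Y := by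
    have : Y = fun ω => g (X ω) + ε ω := funext hY
    rw [this]; exact (hg.comp hX).add hε
  have eMeas : ∀ t : ℝ, Measurable (fun x : ℝ => Complex.exp (Complex.I * t * x)) := by
    intro t
    exact Complex.measurable_exp.comp ((measurable_const.mul Complex.measurable_ofReal))
  have enorm : ∀ (t x : ℝ), ‖Complex.exp (Complex.I * t * x)‖ = 1 := by
    intro t x
    rw [Complex.norm_exp]
    simp [Complex.mul_re, Complex.mul_im]
  -- conditional expectation setup
  have hm : MeasurableSpace.comap (fun ω => (X ω, U ω)) inferInstance
      ≤ (inferInstance : MeasurableSpace Ω) := (hX.prodMk hU).comap_le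
  have hzero : ∀ (h : ℝ × ℝ → ℝ), Measurable h → (∀ p, |h p| ≤ 1) →
      ∫ ω, h (X ω, U ω) * ε ω ∂ℙ = 0 := by
    intro h hh hb
    have hH : StronglyMeasurable[MeasurableSpace.comap (fun ω => (X ω, U ω)) inferInstance]
        (fun ω => h (X ω, U ω)) :=
      (hh.comp (Measurable.of_comap_le le_rfl)).stronglyMeasurable
    have hint : Integrable (fun ω => h (X ω, U ω) * ε ω) ℙ := by
      refine Integrable.mono' hεint
        (((hh.comp (hX.prodMk hU)).mul hε).aestronglyMeasurable) ?_
      filter_upwards with ω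
      rw [Real.norm_eq_abs, abs_mul]
      calc |h (X ω, U ω)| * |ε ω| ≤ 1 * |ε ω| :=
            mul_le_mul_of_nonneg_right (hb _) (abs_nonneg _)
        _ = |ε ω| := one_mul _
    have hmul := condExp_mul_of_stronglyMeasurable_left (μ := ℙ) hH hint hεint'
    have h0 : ℙ[(fun ω => h (X ω, U ω)) * ε|
        MeasurableSpace.comap (fun ω => (X ω, U ω)) inferInstance] =ᵐ[ℙ] 0 := by
      filter_upwards [hmul, hcond] with ω h1 h2
      simp only [Pi.mul_apply, Pi.zero_apply] at h1 h2 ⊢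
      rw [h1, h2, mul_zero]
    have hI : ∫ ω, ((fun ω => h (X ω, U ω)) * ε) ω ∂ℙ
        = ∫ ω, (ℙ[(fun ω => h (X ω, U ω)) * ε|
            MeasurableSpace.comap (fun ω => (X ω, U ω)) inferInstance]) ω ∂ℙ :=
      (integral_condExp hm).symm
    simpa [integral_congr_ae h0] using hI
  -- integrability of the error piece
  have h2int : ∀ t : ℝ, Integrable
      (fun ω => (ε ω : ℂ) * Complex.exp (Complex.I * t * ((X ω : ℂ) + (U ω : ℂ)))) ℙ := by
    intro t
    refine Integrable.mono' hεint
      ((by fun_prop : Measurable (fun ω =>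
        (ε ω : ℂ) * Complex.exp (Complex.I * t * ((X ω : ℂ) + (U ω : ℂ))))).aestronglyMeasurable)
      ?_
    filter_upwards with ω
    have h1 := enorm t (X ω + U ω)
    push_cast at h1
    rw [norm_mul, Complex.norm_real, Real.norm_eq_abs, h1, mul_one]
  -- the vanishing of the error term
  have hB : ∀ t : ℝ,
      ∫ ω, (ε ω : ℂ) * Complex.exp (Complex.I * t * ((X ω : ℂ) + (U ω : ℂ))) ∂ℙ = 0 := by
    intro t
    have h2 := h2int t
    have hre : ∀ ω, ((ε ω : ℂ) * Complex.exp (Complex.I * t * ((X ω : ℂ) + (U ω : ℂ)))).re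
        = Real.cos (t * (X ω + U ω)) * ε ω := by
      intro ω
      have hx : Complex.I * t * ((X ω : ℂ) + (U ω : ℂ))
          = ((t * (X ω + U ω) : ℝ) : ℂ) * Complex.I := by push_cast; ring
      rw [hx, Complex.re_ofReal_mul, Complex.exp_ofReal_mul_I_re]
      ring
    have him : ∀ ω, ((ε ω : ℂ) * Complex.exp (Complex.I * t * ((X ω : ℂ) + (U ω : ℂ)))).im
        = Real.sin (t * (X ω + U ω)) * ε ω := by
      intro ω
      have hx : Complex.I * t * ((X ω : ℂ) + (U ω : ℂ))
          = ((t * (X ω + U ω) : ℝ) : ℂ) * Complex.I := by push_cast; ring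
      rw [hx, Complex.im_ofReal_mul, Complex.exp_ofReal_mul_I_im]
      ring
    apply Complex.ext
    · have hint := integral_re (𝕜 := ℂ) h2
      simp only [RCLike.re_to_complex] at hint
      rw [← hint]
      simp only [hre]
      have h0 := hzero (fun p => Real.cos (t * (p.1 + p.2)))
        (Real.measurable_cos.comp (measurable_const.mul (measurable_fst.add measurable_snd)))
        (fun p => Real.abs_cos_le_one _)
      simpa using h0
    · have hint := integral_im (𝕜 := ℂ) h2
      simp only [RCLike.im_to_complex] at hint
      rw [← hint]
      simp only [him]
      have h0 := hzero (fun p => Real.sin (t * (p.1 + p.2)))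
        (Real.measurable_sin.comp (measurable_const.mul (measurable_fst.add measurable_snd)))
        (fun p => Real.abs_sin_le_one _)
      simpa using h0
  -- the product formula from independence
  have hmap : Measure.map (fun ω => (X ω, U ω)) ℙ = (Measure.map X ℙ).prod (Measure.map U ℙ) :=
    (indepFun_iff_map_prod_eq_prod_map_map hX.aemeasurable hU.aemeasurable).mp hindep
  haveI hPX : IsProbabilityMeasure (Measure.map X ℙ) := Measure.isProbabilityMeasure_map hX.aemeasurable
  haveI hPU : IsProbabilityMeasure (Measure.map U ℙ) := Measure.isProbabilityMeasure_map hU.aemeasurable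
  have hA : ∀ t : ℝ,
      ∫ ω, (g (X ω) : ℂ) * Complex.exp (Complex.I * t * X ω)
        * Complex.exp (Complex.I * t * U ω) ∂ℙ = ψ t * fUFt t := by
    intro t
    have hφ : Measurable (fun p : ℝ × ℝ =>
        ((g p.1 : ℂ) * Complex.exp (Complex.I * t * p.1))
          * Complex.exp (Complex.I * t * p.2)) := by
      exact (((Complex.measurable_ofReal.comp (hg.comp measurable_fst)).mul
        ((eMeas t).comp measurable_fst)).mul ((eMeas t).comp measurable_snd))
    calc ∫ ω, (g (X ω) : ℂ) * Complex.exp (Complex.I * t * X ω)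
            * Complex.exp (Complex.I * t * U ω) ∂ℙ
        = ∫ p : ℝ × ℝ, ((fun x : ℝ => (g x : ℂ) * Complex.exp (Complex.I * t * x)) p.1)
            * ((fun u : ℝ => Complex.exp (Complex.I * t * u)) p.2)
            ∂(Measure.map (fun ω => (X ω, U ω)) ℙ) := by
          rw [integral_map (hX.prodMk hU).aemeasurable hφ.aestronglyMeasurable]
      _ = (∫ x, (g x : ℂ) * Complex.exp (Complex.I * t * x) ∂(Measure.map X ℙ))
            * ∫ u, Complex.exp (Complex.I * t * u) ∂(Measure.map U ℙ) := by
          rw [hmap]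
          exact integral_prod_mul (fun x : ℝ => (g x : ℂ) * Complex.exp (Complex.I * t * x))
            (fun u : ℝ => Complex.exp (Complex.I * t * u))
      _ = ψ t * fUFt t := by
          rw [hψ, hfUFt,
            integral_map hX.aemeasurable
              ((by fun_prop : Measurable (fun x : ℝ =>
                (g x : ℂ) * Complex.exp (Complex.I * t * x))).aestronglyMeasurable),
            integral_map hU.aemeasurable (eMeas t).aestronglyMeasurable]
  -- integrability of the two pieces
  have h1int : ∀ t : ℝ, Integrable (fun ω => (g (X ω) : ℂ)
      * Complex.exp (Complex.I * t * X ω) * Complex.exp (Complex.I * t * U ω)) ℙ := by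
    intro t
    refine Integrable.mono' hgint
      ((((Complex.measurable_ofReal.comp (hg.comp hX)).mul
        ((eMeas t).comp hX)).mul ((eMeas t).comp hU)).aestronglyMeasurable) ?_
    filter_upwards with ω
    rw [norm_mul, norm_mul, Complex.norm_real, Real.norm_eq_abs, enorm t, enorm t]
    simp
  -- the key identity
  have key : ∀ t : ℝ,
      (∫ ω, (Y ω : ℂ) * Complex.exp (Complex.I * t * W ω) ∂ℙ) = ψ t * fUFt t := by
    intro t
    have hpt : (fun ω => (Y ω : ℂ) * Complex.exp (Complex.I * t * W ω))
        = fun ω => (g (X ω) : ℂ) * Complex.exp (Complex.I * t * X ω)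
            * Complex.exp (Complex.I * t * U ω)
          + (ε ω : ℂ) * Complex.exp (Complex.I * t * ((X ω : ℂ) + (U ω : ℂ))) := by
      funext ω
      rw [hY, hW]
      push_cast
      rw [show Complex.I * t * ((X ω : ℂ) + (U ω : ℂ))
          = Complex.I * t * (X ω : ℂ) + Complex.I * t * (U ω : ℂ) by ring,
        Complex.exp_add]
      ring
    rw [hpt, integral_add (h1int t) (h2int t), hA t, hB t, add_zero]
  -- integrability of Y * e^{itW}
  have keyInt : ∀ t : ℝ,
      Integrable (fun ω => (Y ω : ℂ) * Complex.exp (Complex.I * t * W ω)) ℙ := by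
    intro t
    refine Integrable.mono' (hgint.add hεint)
      (((Complex.measurable_ofReal.comp hYm).mul
        ((eMeas t).comp hWm)).aestronglyMeasurable) ?_
    filter_upwards with ω
    rw [norm_mul, Complex.norm_real, Real.norm_eq_abs, enorm t, mul_one, hY]
    exact (abs_add_le _ _)
  refine ⟨key, ?_⟩
  intro t hne n hn
  -- each copy has the same expectation
  have hφm : Measurable (fun p : ℝ × ℝ =>
      (p.2 : ℂ) * Complex.exp (Complex.I * t * p.1)) := by fun_prop
  have hj : ∀ j : ℕ,
      Integrable (fun ω => (Ys j ω : ℂ) * Complex.exp (Complex.I * t * Ws j ω)) ℙ ∧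
      (∫ ω, (Ys j ω : ℂ) * Complex.exp (Complex.I * t * Ws j ω) ∂ℙ) = ψ t * fUFt t := by
    intro j
    have hWYint : Integrable (fun p : ℝ × ℝ =>
        (p.2 : ℂ) * Complex.exp (Complex.I * t * p.1)) (Measure.map (fun ω => (W ω, Y ω)) ℙ) := by
      rw [integrable_map_measure hφm.aestronglyMeasurable (hWm.prodMk hYm).aemeasurable]
      exact keyInt t
    constructor
    · have h' : Integrable (fun p : ℝ × ℝ => (p.2 : ℂ) * Complex.exp (Complex.I * t * p.1))
          (Measure.map (fun ω => (Ws j ω, Ys j ω)) ℙ) := by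
        rw [hiid j]; exact hWYint
      exact (integrable_map_measure hφm.aestronglyMeasurable
        ((hWsmeas j).prodMk (hYsmeas j)).aemeasurable).mp h' 
    · calc (∫ ω, (Ys j ω : ℂ) * Complex.exp (Complex.I * t * Ws j ω) ∂ℙ)
          = ∫ p : ℝ × ℝ, (p.2 : ℂ) * Complex.exp (Complex.I * t * p.1)
              ∂(Measure.map (fun ω => (Ws j ω, Ys j ω)) ℙ) := by
            rw [integral_map ((hWsmeas j).prodMk (hYsmeas j)).aemeasurable
              hφm.aestronglyMeasurable]
        _ = ∫ p : ℝ × ℝ, (p.2 : ℂ) * Complex.exp (Complex.I * t * p.1)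
              ∂(Measure.map (fun ω => (W ω, Y ω)) ℙ) := by rw [hiid j]
        _ = ∫ ω, (Y ω : ℂ) * Complex.exp (Complex.I * t * W ω) ∂ℙ := by
            rw [integral_map (hWm.prodMk hYm).aemeasurable hφm.aestronglyMeasurable]
        _ = ψ t * fUFt t := key t
  have hnne : (n : ℂ) ≠ 0 := Nat.cast_ne_zero.mpr (by omega)
  rw [integral_const_mul,
    integral_finset_sum _ (fun j _ => (hj j).1)]
  have hsum : ∑ j ∈ Finset.range n,
      (∫ ω, (Ys j ω : ℂ) * Complex.exp (Complex.I * t * Ws j ω) ∂ℙ)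
      = (n : ℂ) * (ψ t * fUFt t) := by
    rw [Finset.sum_congr rfl (fun j _ => (hj j).2), Finset.sum_const, Finset.card_range,
      nsmul_eq_mul]
  rw [hsum]
  field_simp
end

section
/- Let X and U be independent real random variables with E|X|^k < ∞ and E|U|^k < ∞, and suppose the characteristic function f_U^{Ft}(t) = E(e^{itU}) is nowhere zero. Let W = X + U and define φ_r(t) = f_U^{Ft}(t) · (i^{−1} d/dt)^r (f_U^{Ft}(t)^{−1}). Then for every t ∈ ℝ, Σ_{ℓ=0}^{k} C(k,ℓ) · E(W^ℓ e^{itW}) · φ_{k−ℓ}(t) = f_U^{Ft}(t) · (i^{−1} d/dt)^k f_X^{Ft}(t) = f_U^{Ft}(t) · E(X^k e^{itX}), where f_X^{Ft}(t) = E(e^{itX}). -/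
open MeasureTheory ProbabilityTheory Complex
open Finset Metric

set_option linter.unusedSectionVars false
set_option maxHeartbeats 1000000

lemma st7_leibniz (n : ℕ) : ∀ (f g : ℝ → ℂ), ContDiff ℝ n f → ContDiff ℝ n g →
    iteratedDeriv n (fun s => f s * g s) = fun t =>
      ∑ ℓ ∈ Finset.range (n+1), (n.choose ℓ : ℂ)
        * iteratedDeriv ℓ f t * iteratedDeriv (n-ℓ) g t := by
  induction n with
  | zero => intro f g _ _; simp
  | succ n ih =>
    intro f g hf hg
    have hf1 : ContDiff ℝ ((n:ℕ∞)+1) f := by exact_mod_cast hf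
    have hg1 : ContDiff ℝ ((n:ℕ∞)+1) g := by exact_mod_cast hg
    have hfd : Differentiable ℝ f := hf1.one_of_succ.differentiable one_ne_zero
    have hgd : Differentiable ℝ g := hg1.one_of_succ.differentiable one_ne_zero
    have hf' : ContDiff ℝ n (deriv f) := by
      have := (contDiff_succ_iff_deriv.mp hf1).2.2; exact_mod_cast this
    have hg' : ContDiff ℝ n (deriv g) := by
      have := (contDiff_succ_iff_deriv.mp hg1).2.2; exact_mod_cast this
    have hfn : ContDiff ℝ n f := hf.of_succ
    have hgn : ContDiff ℝ n g := hg.of_succ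
    have hder : deriv (fun s => f s * g s)
        = fun s => deriv f s * g s + f s * deriv g s := by
      funext s
      exact deriv_mul (hfd s) (hgd s)
    rw [iteratedDeriv_succ', hder]
    have hadd : iteratedDeriv n (fun s => deriv f s * g s + f s * deriv g s)
        = fun t => iteratedDeriv n (fun s => deriv f s * g s) t
          + iteratedDeriv n (fun s => f s * deriv g s) t := by
      funext t
      have h1 : ContDiff ℝ n (fun s => deriv f s * g s) := hf'.mul hgn
      have h2 : ContDiff ℝ n (fun s => f s * deriv g s) := hfn.mul hg'
      have h3 := iteratedDerivWithin_add (Set.mem_univ t) uniqueDiffOn_univ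
        h1.contDiffAt.contDiffWithinAt h2.contDiffAt.contDiffWithinAt
      simpa [iteratedDerivWithin_univ, Pi.add_def] using h3
    rw [hadd, ih _ _ hf' hgn, ih _ _ hfn hg']
    funext t
    -- abbreviations
    have e1 : ∀ ℓ, iteratedDeriv ℓ (deriv f) t = iteratedDeriv (ℓ+1) f t := by
      intro ℓ; rw [← iteratedDeriv_succ']
    have e2 : ∀ ℓ, iteratedDeriv ℓ (deriv g) t = iteratedDeriv (ℓ+1) g t := by
      intro ℓ; rw [← iteratedDeriv_succ']
    simp only [e1, e2]
    set A : ℕ → ℂ := fun j => iteratedDeriv j f t * iteratedDeriv (n+1-j) g t with hA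
    have lhs1 : ∑ ℓ ∈ range (n+1), (n.choose ℓ : ℂ) * iteratedDeriv (ℓ+1) f t
        * iteratedDeriv (n-ℓ) g t = ∑ ℓ ∈ range (n+1), (n.choose ℓ : ℂ) * A (ℓ+1) := by
      refine Finset.sum_congr rfl fun ℓ hℓ => ?_
      rw [hA]; simp only [Nat.succ_sub_succ]; ring
    have lhs2 : ∑ ℓ ∈ range (n+1), (n.choose ℓ : ℂ) * iteratedDeriv ℓ f t
        * iteratedDeriv (n-ℓ+1) g t = ∑ ℓ ∈ range (n+1), (n.choose ℓ : ℂ) * A ℓ := by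
      refine Finset.sum_congr rfl fun ℓ hℓ => ?_
      have : n - ℓ + 1 = n + 1 - ℓ := (Nat.succ_sub (Nat.lt_succ_iff.mp (mem_range.mp hℓ))).symm
      rw [hA, this]; ring
    rw [lhs1, lhs2]
    have rhs : ∑ ℓ ∈ range (n+2), ((n+1).choose ℓ : ℂ) * iteratedDeriv ℓ f t
        * iteratedDeriv (n+1-ℓ) g t = ∑ ℓ ∈ range (n+2), ((n+1).choose ℓ : ℂ) * A ℓ := by
      refine Finset.sum_congr rfl fun ℓ _ => ?_; rw [hA]; ring
    rw [rhs]
    -- now pure sum identity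
    have h3 := Finset.sum_range_succ' (fun ℓ => ((n.choose ℓ : ℂ)) * A ℓ) n
    have h4 : ∑ ℓ ∈ range (n+1), ((n.choose (ℓ+1) : ℂ)) * A (ℓ+1)
        = ∑ ℓ ∈ range n, ((n.choose (ℓ+1) : ℂ)) * A (ℓ+1) := by
      rw [Finset.sum_range_succ, Nat.choose_succ_self]
      simp
    rw [Finset.sum_range_succ' (fun ℓ => (((n+1).choose ℓ : ℕ) : ℂ) * A ℓ) (n+1)]
    simp only [Nat.choose_succ_succ, Nat.cast_add, add_mul, Finset.sum_add_distrib,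
      Nat.choose_zero_right, Nat.cast_one, one_mul]
    rw [h3, h4]
    simp [Nat.choose_zero_right]
    ring


section helpers
variable {Ω : Type*} [MeasureSpace Ω] [IsProbabilityMeasure (ℙ : Measure Ω)]


lemma st7_mom_le {Y : Ω → ℝ} (hY : Measurable Y) {k n : ℕ} (hn : n ≤ k)
    (h : Integrable (fun ω => |Y ω| ^ k) ℙ) :
    Integrable (fun ω => |Y ω| ^ n) ℙ := by
  refine Integrable.mono' ((integrable_const (1:ℝ)).add h)
    ((hY.abs.pow_const n).aestronglyMeasurable) (Filter.Eventually.of_forall fun ω => ?_)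
  simp only [Pi.add_apply]
  rw [Real.norm_eq_abs, _root_.abs_of_nonneg (pow_nonneg (abs_nonneg _) _)]
  rcases le_or_gt (|Y ω|) 1 with h1 | h1
  · have : |Y ω| ^ n ≤ 1 := pow_le_one₀ (abs_nonneg _) h1
    have h2 : (0:ℝ) ≤ |Y ω| ^ k := pow_nonneg (abs_nonneg _) _
    simpa using this.trans (by linarith)
  · have : |Y ω| ^ n ≤ |Y ω| ^ k := pow_le_pow_right₀ h1.le hn
    linarith

lemma st7_norm_integrand (y : ℝ) (n : ℕ) (t : ℝ) :
    ‖(Complex.I * (y:ℂ)) ^ n * Complex.exp (Complex.I * t * y)‖ = |y| ^ n := by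
  have h0 : (Complex.I * (t:ℂ) * y).re = 0 := by simp
  rw [norm_mul, norm_pow, norm_mul, Complex.norm_exp, h0]
  simp

lemma st7_meas_integrand {Y : Ω → ℝ} (hY : Measurable Y) (n : ℕ) (s : ℝ) :
    AEStronglyMeasurable (fun ω => (Complex.I * (Y ω : ℂ)) ^ n
      * Complex.exp (Complex.I * s * Y ω)) ℙ := by
  apply Measurable.aestronglyMeasurable
  fun_prop

lemma st7_int_integrand {Y : Ω → ℝ} (hY : Measurable Y) {k n : ℕ} (hn : n ≤ k)
    (h : Integrable (fun ω => |Y ω| ^ k) ℙ) (s : ℝ) :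
    Integrable (fun ω => (Complex.I * (Y ω : ℂ)) ^ n
      * Complex.exp (Complex.I * s * Y ω)) ℙ := by
  refine Integrable.mono' (st7_mom_le hY hn h) (st7_meas_integrand hY n s)
    (Filter.Eventually.of_forall fun ω => ?_)
  rw [st7_norm_integrand]

lemma st7_hasDerivAt (y : ℝ) (n : ℕ) (s : ℝ) :
    HasDerivAt (fun s : ℝ => (Complex.I * (y:ℂ)) ^ n * Complex.exp (Complex.I * s * y))
      ((Complex.I * (y:ℂ)) ^ (n+1) * Complex.exp (Complex.I * s * y)) s := by
  have h1 : HasDerivAt (fun s : ℝ => Complex.I * (s:ℂ) * y) (Complex.I * y) s := by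
    simpa using ((Complex.ofRealCLM.hasDerivAt (x := s)).const_mul Complex.I).mul_const (y:ℂ)
  have h2 := (h1.cexp).const_mul ((Complex.I * (y:ℂ)) ^ n)
  refine h2.congr_deriv ?_
  ring



lemma st7_hasDerivAt_integral {Y : Ω → ℝ} (hY : Measurable Y) {k n : ℕ} (hn : n + 1 ≤ k)
    (h : Integrable (fun ω => |Y ω| ^ k) ℙ) (t : ℝ) :
    HasDerivAt (fun s : ℝ => ∫ ω, (Complex.I * (Y ω : ℂ)) ^ n
        * Complex.exp (Complex.I * s * Y ω) ∂ℙ)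
      (∫ ω, (Complex.I * (Y ω : ℂ)) ^ (n+1) * Complex.exp (Complex.I * t * Y ω) ∂ℙ) t := by
  have := hasDerivAt_integral_of_dominated_loc_of_deriv_le (μ := (ℙ : Measure Ω))
    (F := fun (s : ℝ) ω => (Complex.I * (Y ω : ℂ)) ^ n * Complex.exp (Complex.I * s * Y ω))
    (F' := fun (s : ℝ) ω => (Complex.I * (Y ω : ℂ)) ^ (n+1) * Complex.exp (Complex.I * s * Y ω))
    (x₀ := t) (bound := fun ω => |Y ω| ^ (n+1)) (s := Metric.ball t 1) (Metric.ball_mem_nhds t one_pos)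
    (Filter.Eventually.of_forall fun s => st7_meas_integrand hY n s)
    (st7_int_integrand hY (Nat.le_of_succ_le hn) h t)
    (st7_meas_integrand hY (n+1) t)
    (Filter.Eventually.of_forall fun ω s _ => le_of_eq (st7_norm_integrand (Y ω) (n+1) s))
    (st7_mom_le hY hn h)
    (Filter.Eventually.of_forall fun ω s _ => st7_hasDerivAt (Y ω) n s)
  exact this.2

lemma st7_iteratedDeriv {Y : Ω → ℝ} (hY : Measurable Y) {k : ℕ}
    (h : Integrable (fun ω => |Y ω| ^ k) ℙ) :
    ∀ n ≤ k, iteratedDeriv n (fun s : ℝ => ∫ ω, Complex.exp (Complex.I * s * Y ω) ∂ℙ)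
      = fun t : ℝ => ∫ ω, (Complex.I * (Y ω : ℂ)) ^ n
          * Complex.exp (Complex.I * t * Y ω) ∂ℙ := by
  intro n
  induction n with
  | zero => intro _; simp
  | succ n ih =>
    intro hn
    rw [iteratedDeriv_succ, ih (Nat.le_of_succ_le hn)]
    funext t
    exact (st7_hasDerivAt_integral hY hn h t).deriv

lemma st7_contDiff {Y : Ω → ℝ} (hY : Measurable Y) {k : ℕ}
    (h : Integrable (fun ω => |Y ω| ^ k) ℙ) :
    ContDiff ℝ k (fun s : ℝ => ∫ ω, Complex.exp (Complex.I * s * Y ω) ∂ℙ) := by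
  suffices H : ContDiff ℝ ((k:ℕ∞)) (fun s : ℝ => ∫ ω, Complex.exp (Complex.I * s * Y ω) ∂ℙ) by
    exact_mod_cast H
  apply contDiff_iff_iteratedDeriv.2
  constructor
  · intro m hm
    have hm' : m ≤ k := by exact_mod_cast hm
    rw [st7_iteratedDeriv hY h m hm']
    apply continuous_of_dominated (bound := fun ω => |Y ω| ^ m)
      (fun s => st7_meas_integrand hY m s)
      (fun s => Filter.Eventually.of_forall fun ω => le_of_eq (st7_norm_integrand (Y ω) m s))
      (st7_mom_le hY hm' h)
    refine Filter.Eventually.of_forall fun ω => ?_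
    fun_prop
  · intro m hm
    have hm' : m + 1 ≤ k := by exact_mod_cast Nat.add_one_le_iff.mpr (by exact_mod_cast hm)
    rw [st7_iteratedDeriv hY h m (Nat.le_of_succ_le hm')]
    exact fun t => (st7_hasDerivAt_integral hY hm' h t).differentiableAt


lemma st7_int_bounded {f : Ω → ℝ} (M : ℝ) (hm : Measurable f) (hb : ∀ ω, |f ω| ≤ M) :
    Integrable f ℙ :=
  Integrable.mono' (integrable_const M) hm.aestronglyMeasurable
    (Filter.Eventually.of_forall fun ω => by simpa using hb ω)

lemma st7_indep_mul {X U : Ω → ℝ} (hX : Measurable X) (hU : Measurable U)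
    (hindep : IndepFun X U ℙ) (s : ℝ) :
    ∫ ω, Complex.exp (Complex.I * s * X ω) * Complex.exp (Complex.I * s * U ω) ∂ℙ
      = (∫ ω, Complex.exp (Complex.I * s * X ω) ∂ℙ)
        * (∫ ω, Complex.exp (Complex.I * s * U ω) ∂ℙ) := by
  set a : Ω → ℝ := fun ω => Real.cos (s * X ω) with ha
  set b : Ω → ℝ := fun ω => Real.sin (s * X ω) with hb
  set c : Ω → ℝ := fun ω => Real.cos (s * U ω) with hc
  set d : Ω → ℝ := fun ω => Real.sin (s * U ω) with hd
  have expand : ∀ (y : ℝ), Complex.exp (Complex.I * s * y)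
      = (Real.cos (s * y) : ℂ) + (Real.sin (s * y) : ℂ) * Complex.I := by
    intro y
    rw [show Complex.I * s * y = ((s * y : ℝ) : ℂ) * Complex.I by push_cast; ring,
      Complex.exp_mul_I, Complex.ofReal_cos, Complex.ofReal_sin]
  have hma : Measurable a := (Real.measurable_cos.comp (measurable_const.mul hX))
  have hmb : Measurable b := (Real.measurable_sin.comp (measurable_const.mul hX))
  have hmc : Measurable c := (Real.measurable_cos.comp (measurable_const.mul hU))
  have hmd : Measurable d := (Real.measurable_sin.comp (measurable_const.mul hU))
  have hba : ∀ ω, |a ω| ≤ 1 := fun ω => Real.abs_cos_le_one _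
  have hbb : ∀ ω, |b ω| ≤ 1 := fun ω => Real.abs_sin_le_one _
  have hbc : ∀ ω, |c ω| ≤ 1 := fun ω => Real.abs_cos_le_one _
  have hbd : ∀ ω, |d ω| ≤ 1 := fun ω => Real.abs_sin_le_one _
  have ia := st7_int_bounded 1 hma hba
  have ib := st7_int_bounded 1 hmb hbb
  have ic := st7_int_bounded 1 hmc hbc
  have id' := st7_int_bounded 1 hmd hbd
  have prodb : ∀ (f g : Ω → ℝ), (∀ ω, |f ω| ≤ 1) → (∀ ω, |g ω| ≤ 1) →
      ∀ ω, |f ω * g ω| ≤ 1 := by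
    intro f g h1 h2 ω
    rw [abs_mul]
    calc |f ω| * |g ω| ≤ 1 * 1 := by
          exact mul_le_mul (h1 ω) (h2 ω) (abs_nonneg _) (by linarith [h1 ω, abs_nonneg (f ω)])
      _ = 1 := by ring
  have iac' := st7_int_bounded 1 (hma.mul hmc) (prodb a c hba hbc)
  have ibd'' := st7_int_bounded 1 (hmb.mul hmd) (prodb b d hbb hbd)
  have iad'' := st7_int_bounded 1 (hma.mul hmd) (prodb a d hba hbd)
  have ibc'' := st7_int_bounded 1 (hmb.mul hmc) (prodb b c hbb hbc)
  have iac : IndepFun a c ℙ := hindep.comp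
    (Real.measurable_cos.comp (measurable_const.mul measurable_id))
    (Real.measurable_cos.comp (measurable_const.mul measurable_id))
  have ibd : IndepFun b d ℙ := hindep.comp
    (Real.measurable_sin.comp (measurable_const.mul measurable_id))
    (Real.measurable_sin.comp (measurable_const.mul measurable_id))
  have iad : IndepFun a d ℙ := hindep.comp
    (Real.measurable_cos.comp (measurable_const.mul measurable_id))
    (Real.measurable_sin.comp (measurable_const.mul measurable_id))
  have ibc : IndepFun b c ℙ := hindep.comp
    (Real.measurable_sin.comp (measurable_const.mul measurable_id))
    (Real.measurable_cos.comp (measurable_const.mul measurable_id))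
  have hac : ∫ ω, a ω * c ω ∂ℙ = (∫ ω, a ω ∂ℙ) * ∫ ω, c ω ∂ℙ :=
    iac.integral_fun_mul_eq_mul_integral ia.aestronglyMeasurable ic.aestronglyMeasurable
  have hbd' : ∫ ω, b ω * d ω ∂ℙ = (∫ ω, b ω ∂ℙ) * ∫ ω, d ω ∂ℙ :=
    ibd.integral_fun_mul_eq_mul_integral ib.aestronglyMeasurable id'.aestronglyMeasurable
  have had : ∫ ω, a ω * d ω ∂ℙ = (∫ ω, a ω ∂ℙ) * ∫ ω, d ω ∂ℙ :=
    iad.integral_fun_mul_eq_mul_integral ia.aestronglyMeasurable id'.aestronglyMeasurable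
  have hbc' : ∫ ω, b ω * c ω ∂ℙ = (∫ ω, b ω ∂ℙ) * ∫ ω, c ω ∂ℙ :=
    ibc.integral_fun_mul_eq_mul_integral ib.aestronglyMeasurable ic.aestronglyMeasurable
  have cint : ∀ (F G : Ω → ℝ), Integrable F ℙ → Integrable G ℙ →
      ∫ ω, ((F ω : ℂ) + (G ω : ℂ) * Complex.I) ∂ℙ
        = ((∫ ω, F ω ∂ℙ : ℝ) : ℂ) + ((∫ ω, G ω ∂ℙ : ℝ) : ℂ) * Complex.I := by
    intro F G hF hG
    have hF' : Integrable (fun ω => ((F ω : ℂ))) ℙ := hF.ofReal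
    have hG' : Integrable (fun ω => ((G ω : ℂ) * Complex.I)) ℙ := hG.ofReal.mul_const _
    rw [integral_add hF' hG', integral_mul_const]
    have e1 : ∫ ω, ((F ω : ℂ)) ∂ℙ = ((∫ ω, F ω ∂ℙ : ℝ) : ℂ) := integral_ofReal
    have e2 : ∫ ω, ((G ω : ℂ)) ∂ℙ = ((∫ ω, G ω ∂ℙ : ℝ) : ℂ) := integral_ofReal
    rw [e1, e2]
  have point : ∀ ω, Complex.exp (Complex.I * s * X ω) * Complex.exp (Complex.I * s * U ω)
      = ((a ω * c ω - b ω * d ω : ℝ) : ℂ)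
        + ((a ω * d ω + b ω * c ω : ℝ) : ℂ) * Complex.I := by
    intro ω
    simp only [ha, hb, hc, hd]
    rw [expand, expand]
    push_cast
    linear_combination ((Complex.sin (s * X ω)) * (Complex.sin (s * U ω))) * Complex.I_sq
  calc ∫ ω, Complex.exp (Complex.I * s * X ω) * Complex.exp (Complex.I * s * U ω) ∂ℙ
      = ∫ ω, (((a ω * c ω - b ω * d ω : ℝ) : ℂ)
          + ((a ω * d ω + b ω * c ω : ℝ) : ℂ) * Complex.I) ∂ℙ := by
        exact integral_congr_ae (Filter.Eventually.of_forall fun ω => point ω)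
    _ = ((∫ ω, (a ω * c ω - b ω * d ω) ∂ℙ : ℝ) : ℂ)
          + ((∫ ω, (a ω * d ω + b ω * c ω) ∂ℙ : ℝ) : ℂ) * Complex.I :=
        cint _ _ (iac'.sub ibd'') (iad''.add ibc'')
    _ = (∫ ω, Complex.exp (Complex.I * s * X ω) ∂ℙ)
        * (∫ ω, Complex.exp (Complex.I * s * U ω) ∂ℙ) := by
        rw [integral_sub (f := fun ω => a ω * c ω) (g := fun ω => b ω * d ω) iac' ibd'',
          integral_add (f := fun ω => a ω * d ω) (g := fun ω => b ω * c ω) iad'' ibc'', hac, hbd', had, hbc']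
        have eX : ∫ ω, Complex.exp (Complex.I * s * X ω) ∂ℙ
            = ((∫ ω, a ω ∂ℙ : ℝ) : ℂ) + ((∫ ω, b ω ∂ℙ : ℝ) : ℂ) * Complex.I := by
          rw [← cint a b ia ib]
          exact integral_congr_ae (Filter.Eventually.of_forall fun ω => expand (X ω))
        have eU : ∫ ω, Complex.exp (Complex.I * s * U ω) ∂ℙ
            = ((∫ ω, c ω ∂ℙ : ℝ) : ℂ) + ((∫ ω, d ω ∂ℙ : ℝ) : ℂ) * Complex.I := by
          rw [← cint c d ic id']
          exact integral_congr_ae (Filter.Eventually.of_forall fun ω => expand (U ω))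
        rw [eX, eU]
        push_cast
        linear_combination (-(((∫ ω, b ω ∂ℙ : ℝ) : ℂ) * ((∫ ω, d ω ∂ℙ : ℝ) : ℂ))) * Complex.I_sq


end helpers


/-- For independent `X`, `U` with `E|X|^k < ∞`, `E|U|^k < ∞`, and
nowhere-vanishing characteristic function `f_U^{Ft}`, with `W = X + U` and
`φ_r(t) = f_U^{Ft}(t) (i⁻¹ d/dt)^r (f_U^{Ft}(t)⁻¹)`, one has, for every `t`,
`∑_{ℓ=0}^k C(k,ℓ) E(W^ℓ e^{itW}) φ_{k-ℓ}(t) = f_U^{Ft}(t) (i⁻¹ d/dt)^k f_X^{Ft}(t)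
 = f_U^{Ft}(t) E(X^k e^{itX})`. -/
theorem statement7
    {Ω : Type*} [MeasureSpace Ω] [IsProbabilityMeasure (ℙ : Measure Ω)]
    (k : ℕ) (X U : Ω → ℝ) (hX : Measurable X) (hU : Measurable U)
    (hindep : IndepFun X U ℙ)
    (hXmom : Integrable (fun ω => |X ω| ^ k) ℙ)
    (hUmom : Integrable (fun ω => |U ω| ^ k) ℙ)
    (W : Ω → ℝ) (hW : ∀ ω, W ω = X ω + U ω)
    (fUFt : ℝ → ℂ) (hfUFt : ∀ t, fUFt t = ∫ ω, Complex.exp (Complex.I * t * U ω) ∂ℙ)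
    (hnz : ∀ t, fUFt t ≠ 0)
    (fXFt : ℝ → ℂ) (hfXFt : ∀ t, fXFt t = ∫ ω, Complex.exp (Complex.I * t * X ω) ∂ℙ)
    (φ : ℕ → ℝ → ℂ)
    (hφ : ∀ r t, φ r t
      = fUFt t * (Complex.I⁻¹) ^ r * iteratedDeriv r (fun s => (fUFt s)⁻¹) t) :
    ∀ t : ℝ,
      (∑ ℓ ∈ Finset.range (k + 1),
          (k.choose ℓ : ℂ) * (∫ ω, ((W ω : ℂ)) ^ ℓ * Complex.exp (Complex.I * t * W ω) ∂ℙ)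
            * φ (k - ℓ) t)
        = fUFt t * (Complex.I⁻¹) ^ k * iteratedDeriv k fXFt t ∧
      fUFt t * (Complex.I⁻¹) ^ k * iteratedDeriv k fXFt t
        = fUFt t * ∫ ω, ((X ω : ℂ)) ^ k * Complex.exp (Complex.I * t * X ω) ∂ℙ := by
  
  intro t
  have hWfun : W = fun ω => X ω + U ω := funext hW
  have hWmeas : Measurable W := by rw [hWfun]; exact hX.add hU
  -- moment bound for W
  have hWmom : Integrable (fun ω => |W ω| ^ k) ℙ := by
    refine Integrable.mono' (((hXmom.add hUmom).const_mul ((2:ℝ)^k)))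
      ((hWmeas.abs.pow_const k).aestronglyMeasurable)
      (Filter.Eventually.of_forall fun ω => ?_)
    rw [Real.norm_eq_abs, _root_.abs_of_nonneg (pow_nonneg (abs_nonneg _) _)]
    have h1 : |W ω| ≤ |X ω| + |U ω| := by rw [hW ω]; exact abs_add_le _ _
    have h2 : |X ω| + |U ω| ≤ 2 * max (|X ω|) (|U ω|) := by
      have := le_max_left (|X ω|) (|U ω|)
      have := le_max_right (|X ω|) (|U ω|)
      linarith
    have h3 : |W ω| ^ k ≤ (2 * max (|X ω|) (|U ω|)) ^ k :=
      pow_le_pow_left₀ (abs_nonneg _) (h1.trans h2) k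
    have h4 : (2 * max (|X ω|) (|U ω|)) ^ k
        = 2 ^ k * (max (|X ω|) (|U ω|)) ^ k := mul_pow _ _ _
    have h5 : (max (|X ω|) (|U ω|)) ^ k ≤ |X ω| ^ k + |U ω| ^ k := by
      rcases le_total (|X ω|) (|U ω|) with h | h
      · rw [max_eq_right h]
        have := pow_nonneg (abs_nonneg (X ω)) k
        linarith
      · rw [max_eq_left h]
        have := pow_nonneg (abs_nonneg (U ω)) k
        linarith
    have h6 : 2 ^ k * (max (|X ω|) (|U ω|)) ^ k ≤ 2 ^ k * (|X ω| ^ k + |U ω| ^ k) := by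
      have : (0:ℝ) ≤ 2 ^ k := by positivity
      nlinarith
    simp only [Pi.add_apply, smul_eq_mul]
    calc |W ω| ^ k ≤ 2 ^ k * (|X ω| ^ k + |U ω| ^ k) := by linarith
      _ = (2:ℝ) ^ k * ((fun ω => |X ω| ^ k) ω + (fun ω => |U ω| ^ k) ω) := by norm_num
  set fW : ℝ → ℂ := fun s => ∫ ω, Complex.exp (Complex.I * s * W ω) ∂ℙ with hfW
  have hfU' : fUFt = fun s : ℝ => ∫ ω, Complex.exp (Complex.I * s * U ω) ∂ℙ := funext hfUFt
  have hfX' : fXFt = fun s : ℝ => ∫ ω, Complex.exp (Complex.I * s * X ω) ∂ℙ := funext hfXFt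
  -- multiplicativity
  have hmul : ∀ s, fW s = fXFt s * fUFt s := by
    intro s
    rw [hfX', hfU', hfW]
    simp only
    rw [← st7_indep_mul hX hU hindep s]
    refine integral_congr_ae (Filter.Eventually.of_forall fun ω => ?_)
    simp only
    rw [hW ω, ← Complex.exp_add]
    congr 1
    push_cast
    ring
  have hXeq : fXFt = fun s => fW s * (fUFt s)⁻¹ := by
    funext s
    rw [eq_mul_inv_iff_mul_eq₀ (hnz s), ← hmul s]
  -- smoothness
  have cW : ContDiff ℝ k fW := st7_contDiff hWmeas hWmom
  have cU : ContDiff ℝ k fUFt := by rw [hfU']; exact st7_contDiff hU hUmom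
  have cUinv : ContDiff ℝ k (fun s => (fUFt s)⁻¹) := cU.inv hnz
  -- derivative formulas
  have dW : ∀ n, n ≤ k → iteratedDeriv n fW t
      = ∫ ω, (Complex.I * (W ω : ℂ)) ^ n * Complex.exp (Complex.I * t * W ω) ∂ℙ := by
    intro n hn
    rw [st7_iteratedDeriv hWmeas hWmom n hn]
  have dWmom : ∀ n, n ≤ k → iteratedDeriv n fW t
      = Complex.I ^ n * ∫ ω, ((W ω : ℂ)) ^ n * Complex.exp (Complex.I * t * W ω) ∂ℙ := by
    intro n hn
    rw [dW n hn]
    simp_rw [mul_pow, mul_assoc]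
    rw [integral_const_mul]
  have dXk : iteratedDeriv k fXFt t
      = Complex.I ^ k * ∫ ω, ((X ω : ℂ)) ^ k * Complex.exp (Complex.I * t * X ω) ∂ℙ := by
    rw [hfX', st7_iteratedDeriv hX hXmom k le_rfl]
    simp_rw [mul_pow, mul_assoc]
    rw [integral_const_mul]
  have hIk : ∀ n : ℕ, (Complex.I⁻¹) ^ n * Complex.I ^ n = 1 := by
    intro n
    rw [← mul_pow, inv_mul_cancel₀ Complex.I_ne_zero, one_pow]
  constructor
  · -- first identity
    have hsum : ∀ ℓ ∈ Finset.range (k + 1),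
        (k.choose ℓ : ℂ) * (∫ ω, ((W ω : ℂ)) ^ ℓ * Complex.exp (Complex.I * t * W ω) ∂ℙ)
            * φ (k - ℓ) t
          = fUFt t * (Complex.I⁻¹) ^ k * ((k.choose ℓ : ℂ) * iteratedDeriv ℓ fW t
            * iteratedDeriv (k - ℓ) (fun s => (fUFt s)⁻¹) t) := by
      intro ℓ hℓ
      have hℓk : ℓ ≤ k := Nat.lt_succ_iff.mp (Finset.mem_range.mp hℓ)
      rw [hφ, dWmom ℓ hℓk]
      have hpow : (Complex.I⁻¹) ^ k = (Complex.I⁻¹) ^ ℓ * (Complex.I⁻¹) ^ (k - ℓ) := by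
        rw [← pow_add, Nat.add_sub_cancel' hℓk]
      rw [hpow]
      linear_combination (-(fUFt t * (Complex.I⁻¹) ^ (k - ℓ) * (k.choose ℓ : ℂ)
        * (∫ ω, ((W ω : ℂ)) ^ ℓ * Complex.exp (Complex.I * t * W ω) ∂ℙ)
        * iteratedDeriv (k - ℓ) (fun s => (fUFt s)⁻¹) t)) * (hIk ℓ)
    rw [Finset.sum_congr rfl hsum, ← Finset.mul_sum]
    congr 1
    rw [hXeq, st7_leibniz k fW (fun s => (fUFt s)⁻¹) cW cUinv]
  · -- second identity
    rw [dXk, show fUFt t * (Complex.I⁻¹) ^ k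
        * (Complex.I ^ k * ∫ ω, ((X ω : ℂ)) ^ k * Complex.exp (Complex.I * t * X ω) ∂ℙ)
      = ((Complex.I⁻¹) ^ k * Complex.I ^ k)
        * (fUFt t * ∫ ω, ((X ω : ℂ)) ^ k * Complex.exp (Complex.I * t * X ω) ∂ℙ) by ring,
      hIk k, one_mul]
end

section
/- Define K : ℝ → ℝ by K(x) = 48 cos(x) (1 − 15 x^{−2}) (π x^4)^{−1} − 144 sin(x) (2 − 5 x^{−2}) (π x^5)^{−1} for x ≠ 0 (extended continuously at 0). Then K is integrable and its Fourier transform satisfies K^{Ft}(t) = ∫ e^{itx} K(x) dx = (1 − t²)³ for |t| ≤ 1 and K^{Ft}(t) = 0 for |t| > 1. In particular, ∫ K(x) dx = 1. -/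
open MeasureTheory Real FourierTransform

lemma key_integral (x : ℝ) (hx : x ≠ 0) :
    ∫ u in (-1:ℝ)..1, (1-u^2)^3 * Real.cos (u*x)
      = (2*((720 - 288*x^2) * Real.sin x + (48*x^3-720*x) * Real.cos x)) / x^7 := by
  have H : ∀ u ∈ Set.uIcc (-1:ℝ) 1, HasDerivAt
      (fun u : ℝ => (Real.sin (u*x) * ((x^6+6*x^4+72*x^2+720) + (-3*x^6-36*x^4-360*x^2) * u^2
          + (3*x^6+30*x^4) * u^4 + (-x^6) * u^6)
        + Real.cos (u*x) * ((-6*x^5-72*x^3-720*x) * u + (12*x^5+120*x^3) * u^3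
          + (-6*x^5) * u^5)) / x^7)
      ((1-u^2)^3 * Real.cos (u*x)) u := by
    intro u _
    have hs : HasDerivAt (fun u : ℝ => Real.sin (u*x)) (Real.cos (u*x) * x) u :=
      (hasDerivAt_mul_const x).sin
    have hc : HasDerivAt (fun u : ℝ => Real.cos (u*x)) (-Real.sin (u*x) * x) u :=
      (hasDerivAt_mul_const x).cos
    have hA : HasDerivAt (fun u : ℝ => (x^6+6*x^4+72*x^2+720) + (-3*x^6-36*x^4-360*x^2) * u^2
        + (3*x^6+30*x^4) * u^4 + (-x^6) * u^6)
        (0 + (-3*x^6-36*x^4-360*x^2) * (2*u^1) + (3*x^6+30*x^4) * (4*u^3)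
          + (-x^6) * (6*u^5)) u := by
      exact (((hasDerivAt_const u _).add ((hasDerivAt_pow 2 u).const_mul _)).add
        ((hasDerivAt_pow 4 u).const_mul _)).add ((hasDerivAt_pow 6 u).const_mul _)
    have hB : HasDerivAt (fun u : ℝ => (-6*x^5-72*x^3-720*x) * u + (12*x^5+120*x^3) * u^3
        + (-6*x^5) * u^5)
        ((-6*x^5-72*x^3-720*x) * 1 + (12*x^5+120*x^3) * (3*u^2) + (-6*x^5) * (5*u^4)) u := by
      exact (((hasDerivAt_id' u).const_mul _).add ((hasDerivAt_pow 3 u).const_mul _)).add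
        ((hasDerivAt_pow 5 u).const_mul _)
    have h := ((hs.mul hA).add (hc.mul hB)).div_const (x^7)
    refine h.congr_deriv ?_
    field_simp
    ring
  rw [intervalIntegral.integral_eq_sub_of_hasDerivAt H
    ((Continuous.mul (by continuity) (by continuity)).intervalIntegrable _ _)]
  simp only [Real.sin_neg, Real.cos_neg, neg_mul, one_mul, neg_neg, mul_one]
  field_simp
  ring

lemma sin_integral_zero (x : ℝ) :
    ∫ u in (-1:ℝ)..1, (1-u^2)^3 * Real.sin (u*x) = 0 := by
  have h := intervalIntegral.integral_comp_neg (a := (-1:ℝ)) (b := 1)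
    (fun u : ℝ => (1-u^2)^3 * Real.sin (u*x))
  simp only [neg_neg] at h
  have h2 : ∫ u in (-1:ℝ)..1, (1-(-u)^2)^3 * Real.sin (-u*x)
      = - ∫ u in (-1:ℝ)..1, (1-u^2)^3 * Real.sin (u*x) := by
    rw [← intervalIntegral.integral_neg]
    apply intervalIntegral.integral_congr
    intro u _
    simp [Real.sin_neg]
  rw [h2] at h
  linarith

lemma complex_integrand (u x : ℝ) :
    Complex.exp (((-(u*x) : ℝ) : ℂ) * Complex.I) * (((1-u^2)^3 : ℝ) : ℂ)
      = ((((1-u^2)^3 * Real.cos (u*x) : ℝ)) : ℂ)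
        - ((((1-u^2)^3 * Real.sin (u*x) : ℝ)) : ℂ) * Complex.I := by
  rw [Complex.exp_mul_I]
  rw [show ((-(u*x):ℝ) : ℂ) = ((-(u*x) : ℝ) : ℂ) from rfl]
  rw [← Complex.ofReal_cos, ← Complex.ofReal_sin]
  simp [Real.cos_neg, Real.sin_neg]
  ring

lemma complex_interval (x : ℝ) (hx : x ≠ 0) :
    ∫ u in (-1:ℝ)..1, Complex.exp (((-(u*x) : ℝ) : ℂ) * Complex.I) * (((1-u^2)^3 : ℝ) : ℂ)
      = (((2*((720 - 288*x^2) * Real.sin x + (48*x^3-720*x) * Real.cos x)) / x^7 : ℝ) : ℂ) := by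
  have : ∀ u ∈ Set.uIcc (-1:ℝ) 1,
      Complex.exp (((-(u*x) : ℝ) : ℂ) * Complex.I) * (((1-u^2)^3 : ℝ) : ℂ)
      = ((((1-u^2)^3 * Real.cos (u*x) : ℝ)) : ℂ)
        - ((((1-u^2)^3 * Real.sin (u*x) : ℝ)) : ℂ) * Complex.I :=
    fun u _ => complex_integrand u x
  rw [intervalIntegral.integral_congr this, intervalIntegral.integral_sub,
    intervalIntegral.integral_mul_const, intervalIntegral.integral_ofReal,
    intervalIntegral.integral_ofReal, key_integral x hx, sin_integral_zero]
  · simp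
  · exact ((Continuous.intervalIntegrable (by continuity) _ _) : IntervalIntegrable
      (fun u : ℝ => ((((1-u^2)^3 * Real.cos (u*x) : ℝ)) : ℂ)) volume (-1) 1)
  · exact ((Continuous.intervalIntegrable (by continuity) _ _) : IntervalIntegrable
      (fun u : ℝ => ((((1-u^2)^3 * Real.sin (u*x) : ℝ)) : ℂ) * Complex.I) volume (-1) 1)

noncomputable def s11g : ℝ → ℝ := fun t => (max (1 - t^2) 0)^3

lemma s11g_eq (t : ℝ) : s11g t = if |t| ≤ 1 then (1 - t^2)^3 else 0 := by
  unfold s11g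
  rcases le_or_gt |t| 1 with h|h
  · rw [if_pos h, max_eq_left]
    nlinarith [sq_abs t, abs_nonneg t]
  · rw [if_neg h.not_ge, max_eq_right]
    · norm_num
    · nlinarith [sq_abs t, abs_nonneg t]

lemma s11g_zero {t : ℝ} (h : 1 ≤ |t|) : s11g t = 0 := by
  unfold s11g
  rw [max_eq_right]
  · norm_num
  · nlinarith [sq_abs t, abs_nonneg t]

lemma s11g_cont : Continuous s11g := by unfold s11g; continuity

noncomputable def s11f : ℝ → ℂ := fun ξ => ((s11g (2*π*ξ) : ℝ) : ℂ)

lemma s11f_cont : Continuous s11f := by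
  exact Complex.continuous_ofReal.comp (s11g_cont.comp (by continuity))

lemma s11f_supp : HasCompactSupport s11f := by
  apply HasCompactSupport.intro (isCompact_Icc (a := (-1:ℝ)) (b := 1))
  intro x hx
  simp only [Set.mem_Icc, not_and_or, not_le] at hx
  have h1 : 1 ≤ |2*π*x| := by
    have hπ : (3:ℝ) < π := pi_gt_three
    rcases hx with h|h
    · rw [abs_mul]
      have : 1 ≤ |x| := by rw [abs_of_neg (by linarith)]; linarith
      have : |2*π| = 2*π := abs_of_pos (by linarith)
      nlinarith [abs_nonneg x]
    · rw [abs_mul]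
      have h2 : 1 ≤ |x| := by rw [abs_of_pos (by linarith)]; linarith
      have : |2*π| = 2*π := abs_of_pos (by linarith)
      nlinarith [abs_nonneg x]
  simp only [s11f, s11g_zero h1, Complex.ofReal_zero]

lemma s11f_int : Integrable s11f := s11f_cont.integrable_of_hasCompactSupport s11f_supp

lemma fourier_s11f (x : ℝ) (hx : x ≠ 0) :
    𝓕 s11f x = (((48 * Real.cos x * (1 - 15 * (x ^ 2)⁻¹) * (π * x ^ 4)⁻¹
            - 144 * Real.sin x * (2 - 5 * (x ^ 2)⁻¹) * (π * x ^ 5)⁻¹ : ℝ)) : ℂ) := by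
  rw [Real.fourier_real_eq_integral_exp_smul]
  have step1 : ∀ ξ : ℝ, Complex.exp (((-2 * π * ξ * x : ℝ):ℂ) * Complex.I) • s11f ξ
      = (fun u : ℝ => Complex.exp (((-(u*x) : ℝ) : ℂ) * Complex.I) * ((s11g u : ℝ) : ℂ)) (2*π*ξ) := by
    intro ξ
    simp only [smul_eq_mul, s11f]
    congr 3
    push_cast; ring
  simp_rw [step1]
  have hcomp : (∫ v : ℝ, Complex.exp (((-((2*π*v)*x) : ℝ) : ℂ) * Complex.I) * ((s11g (2*π*v) : ℝ) : ℂ))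
      = |(2*π)⁻¹| • ∫ u : ℝ, Complex.exp (((-(u*x) : ℝ) : ℂ) * Complex.I) * ((s11g u : ℝ) : ℂ) :=
    MeasureTheory.Measure.integral_comp_mul_left
      (fun u : ℝ => Complex.exp (((-(u*x) : ℝ) : ℂ) * Complex.I) * ((s11g u : ℝ) : ℂ)) (2*π)
  rw [hcomp, abs_of_pos (by positivity : (0:ℝ) < (2*π)⁻¹)]
  have step2 : ∫ u : ℝ, Complex.exp (((-(u*x) : ℝ) : ℂ) * Complex.I) * ((s11g u : ℝ) : ℂ)
      = ∫ u in Set.Icc (-1:ℝ) 1,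
          Complex.exp (((-(u*x) : ℝ) : ℂ) * Complex.I) * ((s11g u : ℝ) : ℂ) := by
    rw [MeasureTheory.setIntegral_eq_integral_of_forall_compl_eq_zero]
    intro u hu
    simp only [Set.mem_Icc, not_and_or, not_le] at hu
    have h1 : 1 ≤ |u| := by
      rcases hu with h|h
      · rw [abs_of_neg (by linarith)]; linarith
      · rw [abs_of_pos (by linarith)]; linarith
    rw [s11g_zero h1]
    simp
  rw [step2, MeasureTheory.integral_Icc_eq_integral_Ioc,
    ← intervalIntegral.integral_of_le (by norm_num : (-1:ℝ) ≤ 1)]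
  have step3 : ∫ u in (-1:ℝ)..1,
      Complex.exp (((-(u*x) : ℝ) : ℂ) * Complex.I) * ((s11g u : ℝ) : ℂ)
      = ∫ u in (-1:ℝ)..1, Complex.exp (((-(u*x) : ℝ) : ℂ) * Complex.I) * (((1-u^2)^3 : ℝ) : ℂ) := by
    apply intervalIntegral.integral_congr
    intro u hu
    rw [Set.uIcc_of_le (by norm_num : (-1:ℝ) ≤ 1), Set.mem_Icc] at hu
    have h1 : |u| ≤ 1 := abs_le.2 ⟨hu.1, hu.2⟩
    simp only [s11g_eq]
    rw [if_pos h1]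
  rw [step3, complex_interval x hx]
  rw [Complex.real_smul]
  rw [← Complex.ofReal_mul, Complex.ofReal_inj]
  have hπ : π ≠ 0 := pi_ne_zero
  field_simp
  ring

lemma K_bound (K : ℝ → ℝ)
    (hK : ∀ x : ℝ, x ≠ 0 →
      K x = 48 * Real.cos x * (1 - 15 * (x ^ 2)⁻¹) * (π * x ^ 4)⁻¹
            - 144 * Real.sin x * (2 - 5 * (x ^ 2)⁻¹) * (π * x ^ 5)⁻¹)
    (x : ℝ) (hx1 : 1 ≤ |x|) : |K x| ≤ 1184 * (1 + x^2)⁻¹ := by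
  have hx : x ≠ 0 := by intro h; rw [h] at hx1; simp at hx1; linarith
  have hx2 : (1:ℝ) ≤ x^2 := by nlinarith [sq_abs x]
  have hπ : (3:ℝ) < π := pi_gt_three
  have hy0 : (0:ℝ) < (x^2)⁻¹ := by positivity
  have hy1 : (x^2)⁻¹ ≤ 1 := by
    rw [inv_le_one_iff₀]; right; exact hx2
  rw [hK x hx]
  have habs : |48 * Real.cos x * (1 - 15 * (x ^ 2)⁻¹) * (π * x ^ 4)⁻¹
      - 144 * Real.sin x * (2 - 5 * (x ^ 2)⁻¹) * (π * x ^ 5)⁻¹|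
      ≤ |48 * Real.cos x * (1 - 15 * (x ^ 2)⁻¹) * (π * x ^ 4)⁻¹|
        + |144 * Real.sin x * (2 - 5 * (x ^ 2)⁻¹) * (π * x ^ 5)⁻¹| := by
    rw [sub_eq_add_neg]
    refine (abs_add_le _ _).trans ?_
    rw [abs_neg]
  refine habs.trans ?_
  have hb1 : |48 * Real.cos x * (1 - 15 * (x ^ 2)⁻¹) * (π * x ^ 4)⁻¹|
      ≤ 48 * 1 * 16 * (3 * x^2)⁻¹ := by
    rw [abs_mul, abs_mul, abs_mul]
    have e1 : |(48:ℝ)| = 48 := by norm_num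
    have e2 : |(π * x ^ 4)⁻¹| = (π * x^4)⁻¹ := abs_of_pos (by positivity)
    rw [e1, e2]
    have h3 : (π * x^4)⁻¹ ≤ (3 * x^2)⁻¹ := by
      apply inv_anti₀ (by positivity)
      nlinarith [sq_nonneg x, sq_nonneg (x^2)]
    gcongr
    · exact Real.abs_cos_le_one x
    · rw [abs_le]; constructor <;> nlinarith
  have hb2 : |144 * Real.sin x * (2 - 5 * (x ^ 2)⁻¹) * (π * x ^ 5)⁻¹|
      ≤ 144 * 1 * 7 * (3 * x^2)⁻¹ := by
    rw [abs_mul, abs_mul, abs_mul]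
    have e1 : |(144:ℝ)| = 144 := by norm_num
    have e2 : |(π * x ^ 5)⁻¹| = (π * |x|^5)⁻¹ := by
      rw [abs_inv, abs_mul, abs_of_pos Real.pi_pos, abs_pow]
    rw [e1, e2]
    have h3 : (π * |x|^5)⁻¹ ≤ (3 * x^2)⁻¹ := by
      apply inv_anti₀ (by positivity)
      have : |x|^2 ≤ |x|^5 := pow_le_pow_right₀ hx1 (by norm_num)
      rw [sq_abs] at this
      nlinarith [abs_nonneg x]
    gcongr
    · exact Real.abs_sin_le_one x
    · rw [abs_le]; constructor <;> nlinarith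
  have hfin : (48 * 1 * 16 * (3 * x^2)⁻¹ : ℝ) + 144 * 1 * 7 * (3 * x^2)⁻¹
      ≤ 1184 * (1 + x^2)⁻¹ := by
    have h4 : (1 + x^2)⁻¹ ≥ (2 * x^2)⁻¹ := by
      apply inv_anti₀ (by positivity)
      nlinarith
    have e : (48 * 1 * 16 * (3 * x^2)⁻¹ : ℝ) + 144 * 1 * 7 * (3 * x^2)⁻¹
        = 1184 * (2 * x^2)⁻¹ := by
      rw [mul_inv, mul_inv]
      ring
    rw [e]
    exact mul_le_mul_of_nonneg_left h4 (by norm_num)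
  linarith

lemma K_integrable (K : ℝ → ℝ) (hKcont : Continuous K)
    (hK : ∀ x : ℝ, x ≠ 0 →
      K x = 48 * Real.cos x * (1 - 15 * (x ^ 2)⁻¹) * (π * x ^ 4)⁻¹
            - 144 * Real.sin x * (2 - 5 * (x ^ 2)⁻¹) * (π * x ^ 5)⁻¹) :
    Integrable K := by
  apply (hKcont.locallyIntegrable).integrable_of_isBigO_cocompact
    (g := fun x : ℝ => (1+x^2)⁻¹)
  · apply Asymptotics.IsBigO.of_bound 1184
    have hev : ∀ᶠ x : ℝ in Filter.cocompact ℝ, 1 ≤ |x| := by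
      rw [cocompact_eq_atBot_atTop, Filter.eventually_sup]
      constructor
      · filter_upwards [Filter.eventually_le_atBot (-1:ℝ)] with x hx
        rw [abs_of_neg (by linarith)]; linarith
      · filter_upwards [Filter.eventually_ge_atTop (1:ℝ)] with x hx
        rw [abs_of_pos (by linarith)]; linarith
    filter_upwards [hev] with x hx
    have := K_bound K hK x hx
    have e : ‖(1+x^2)⁻¹‖ = (1+x^2)⁻¹ := by
      rw [Real.norm_eq_abs, abs_of_pos (by positivity)]
    rw [Real.norm_eq_abs, e]
    linarith
  · exact ⟨Set.univ, Filter.univ_mem, integrable_inv_one_add_sq.integrableOn⟩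

/-- The kernel
`K(x) = 48 cos x (1 - 15 x⁻²)(π x⁴)⁻¹ - 144 sin x (2 - 5 x⁻²)(π x⁵)⁻¹` (for
`x ≠ 0`, extended continuously at `0`) is integrable, its Fourier transform is
`K^{Ft}(t) = (1 - t²)³` for `|t| ≤ 1` and `0` for `|t| > 1`, and `∫ K = 1`. -/
theorem statement11
    (K : ℝ → ℝ) (hKcont : Continuous K)
    (hK : ∀ x : ℝ, x ≠ 0 →
      K x = 48 * Real.cos x * (1 - 15 * (x ^ 2)⁻¹) * (π * x ^ 4)⁻¹
            - 144 * Real.sin x * (2 - 5 * (x ^ 2)⁻¹) * (π * x ^ 5)⁻¹) :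
    Integrable K volume ∧
    (∀ t : ℝ,
      (∫ x : ℝ, Complex.exp (Complex.I * t * x) * (K x : ℂ) ∂volume)
        = if |t| ≤ 1 then (((1 - t ^ 2) ^ 3 : ℝ) : ℂ) else 0) ∧
    (∫ x : ℝ, K x ∂volume) = 1 := by
  have hKint : Integrable K volume := K_integrable K hKcont hK
  have hmain : (fun x : ℝ => ((K x : ℝ) : ℂ)) = 𝓕 s11f := by
    apply Continuous.ext_on (dense_compl_singleton (0:ℝ))
    · exact Complex.continuous_ofReal.comp hKcont
    · exact VectorFourier.fourierIntegral_continuous Real.continuous_fourierChar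
        (by exact continuous_inner) s11f_int
    · intro x hx
      have hx0 : x ≠ 0 := hx
      show ((K x : ℝ) : ℂ) = 𝓕 s11f x
      rw [fourier_s11f x hx0, hK x hx0]
  have hKc_int : Integrable (fun x : ℝ => ((K x : ℝ) : ℂ)) := hKint.ofReal
  have hFint : Integrable (𝓕 s11f) := by rw [← hmain]; exact hKc_int
  have hinv : 𝓕⁻ (𝓕 s11f) = s11f := s11f_cont.fourierInv_fourier_eq s11f_int hFint
  have hFT : ∀ t : ℝ, (∫ x : ℝ, Complex.exp (Complex.I * t * x) * (K x : ℂ) ∂volume)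
      = ((s11g t : ℝ) : ℂ) := by
    intro t
    have hπ : π ≠ 0 := pi_ne_zero
    calc (∫ x : ℝ, Complex.exp (Complex.I * t * x) * (K x : ℂ) ∂volume)
        = ∫ v : ℝ, Complex.exp (((-2 * π * v * (-(t/(2*π))) : ℝ) : ℂ) * Complex.I)
            • (𝓕 s11f) v := by
          rw [← hmain]
          congr 1
          funext v
          rw [smul_eq_mul]
          congr 1
          have harg : (-2 * π * v * (-(t/(2*π))) : ℝ) = t * v := by
            field_simp
          rw [harg]
          push_cast
          ring
      _ = 𝓕 (𝓕 s11f) (-(t/(2*π))) :=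
          (Real.fourier_real_eq_integral_exp_smul (𝓕 s11f) (-(t/(2*π)))).symm
      _ = 𝓕⁻ (𝓕 s11f) (t/(2*π)) :=
          (Real.fourierInv_eq_fourier_neg (𝓕 s11f) _).symm
      _ = s11f (t/(2*π)) := by rw [hinv]
      _ = ((s11g t : ℝ) : ℂ) := by
          unfold s11f
          congr 2
          field_simp
  refine ⟨hKint, fun t => ?_, ?_⟩
  · rw [hFT t, s11g_eq]
    split_ifs <;> simp
  · have h0 := hFT 0
    simp only [Complex.ofReal_zero, mul_zero, zero_mul, Complex.exp_zero, one_mul] at h0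
    rw [show (∫ x : ℝ, ((K x : ℝ) : ℂ)) = (((∫ x : ℝ, K x) : ℝ) : ℂ) from integral_ofReal] at h0
    rw [s11g_eq] at h0
    norm_num at h0
    exact_mod_cast h0
end

section
/- Let X and ε be independent real random variables with E(ε) = 0, and let Y = Σ_{j=0}^{p} β_j X^j + ε for real coefficients β_0, …, β_p. Fix r ≥ 1 and assume E|ε|^r < ∞ and E|X|^{pr} < ∞. Writing ω_s = E(ε^s), one has ω_r = E(Y^r) − Σ_{s=0}^{r−1} Σ_{t_0 + ⋯ + t_p = r−s} (r! / (s! t_0! ⋯ t_p!)) · ω_s · β_0^{t_0} ⋯ β_p^{t_p} · E(X^{t_1 + 2t_2 + ⋯ + p t_p}), where the inner sum is over nonnegative integers t_0, …, t_p with t_0 + ⋯ + t_p = r − s. -/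
open MeasureTheory ProbabilityTheory

lemma aux_int_pow {Ω : Type*} [MeasureSpace Ω] [IsProbabilityMeasure (ℙ : Measure Ω)]
    {f : Ω → ℝ} (hf : Measurable f) {n k : ℕ} (hk : k ≤ n)
    (h : Integrable (fun ω => |f ω| ^ n) ℙ) :
    Integrable (fun ω => f ω ^ k) ℙ := by
  refine Integrable.mono' (h.add (integrable_const 1)) ((hf.pow_const k).aestronglyMeasurable) ?_
  filter_upwards with ω
  simp only [Pi.add_apply]
  have : ‖f ω ^ k‖ = |f ω| ^ k := by rw [Real.norm_eq_abs, abs_pow]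
  rw [this]
  rcases le_total (|f ω|) 1 with h1 | h1
  · have h2 : |f ω| ^ k ≤ 1 := pow_le_one₀ (abs_nonneg _) h1
    have h3 : (0:ℝ) ≤ |f ω| ^ n := pow_nonneg (abs_nonneg _) n
    linarith
  · have h2 : |f ω| ^ k ≤ |f ω| ^ n := pow_le_pow_right₀ h1 hk
    linarith

/-- Let `X` and `ε` be independent with `E ε = 0`, and
`Y = ∑_{j=0}^p β_j X^j + ε`. For `r ≥ 1`, with `E|ε|^r < ∞` and `E|X|^{pr} < ∞`,
writing `ω_s = E(ε^s)`, one has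
`ω_r = E(Y^r) - ∑_{s=0}^{r-1} ∑_{t_0+⋯+t_p = r-s} (r!/(s! t_0! ⋯ t_p!))
        ω_s β_0^{t_0} ⋯ β_p^{t_p} E(X^{t_1 + 2 t_2 + ⋯ + p t_p})`. -/
theorem statement14
    {Ω : Type*} [MeasureSpace Ω] [IsProbabilityMeasure (ℙ : Measure Ω)]
    (p : ℕ) (β : Fin (p + 1) → ℝ) (X ε : Ω → ℝ)
    (hX : Measurable X) (hε : Measurable ε)
    (hindep : IndepFun X ε ℙ)
    (hεint : Integrable ε ℙ) (hmean : ∫ ω, ε ω ∂ℙ = 0)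
    (r : ℕ) (hr : 1 ≤ r)
    (hεmom : Integrable (fun ω => |ε ω| ^ r) ℙ)
    (hXmom : Integrable (fun ω => |X ω| ^ (p * r)) ℙ)
    (Y : Ω → ℝ) (hY : ∀ ω, Y ω = (∑ j : Fin (p + 1), β j * (X ω) ^ (j : ℕ)) + ε ω) :
    (∫ ω, (ε ω) ^ r ∂ℙ)
      = (∫ ω, (Y ω) ^ r ∂ℙ)
        - ∑ s ∈ Finset.range r,
            ∑ t ∈ Finset.Nat.antidiagonalTuple (p + 1) (r - s),
              ((r.factorial : ℝ) /
                  ((s.factorial : ℝ) * ∏ i : Fin (p + 1), ((t i).factorial : ℝ)))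
                * (∫ ω, (ε ω) ^ s ∂ℙ)
                * (∏ i : Fin (p + 1), (β i) ^ (t i))
                * (∫ ω, (X ω) ^ (∑ i : Fin (p + 1), (i : ℕ) * t i) ∂ℙ) := by
  -- integrability of powers
  have hXk : ∀ k, k ≤ p * r → Integrable (fun ω => X ω ^ k) ℙ :=
    fun k hk => aux_int_pow hX hk hXmom
  have hεs : ∀ s, s ≤ r → Integrable (fun ω => ε ω ^ s) ℙ :=
    fun s hs => aux_int_pow hε hs hεmom
  have hind : ∀ s k : ℕ, IndepFun (fun ω => ε ω ^ s) (fun ω => X ω ^ k) ℙ :=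
    fun s k => hindep.symm.comp (measurable_id.pow_const s) (measurable_id.pow_const k)
  have hmulint : ∀ s, s ≤ r → ∀ k, k ≤ p * r →
      Integrable (fun ω => ε ω ^ s * X ω ^ k) ℙ :=
    fun s hs k hk => (hind s k).integrable_mul (hεs s hs) (hXk k hk)
  have hmuleq : ∀ s, s ≤ r → ∀ k, k ≤ p * r →
      ∫ ω, ε ω ^ s * X ω ^ k ∂ℙ = (∫ ω, ε ω ^ s ∂ℙ) * ∫ ω, X ω ^ k ∂ℙ :=
    fun s hs k hk => (hind s k).integral_fun_mul_eq_mul_integral (hεs s hs).aestronglyMeasurable (hXk k hk).aestronglyMeasurable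
  -- exponent bound
  have hw : ∀ (m : ℕ), m ≤ r → ∀ t ∈ Finset.Nat.antidiagonalTuple (p + 1) m,
      (∑ i : Fin (p + 1), (i : ℕ) * t i) ≤ p * r := by
    intro m hm t ht
    rw [Finset.Nat.mem_antidiagonalTuple] at ht
    calc ∑ i : Fin (p + 1), (i : ℕ) * t i
        ≤ ∑ i : Fin (p + 1), p * t i :=
          Finset.sum_le_sum fun i _ => Nat.mul_le_mul_right _ (Nat.le_of_lt_succ i.isLt)
      _ = p * m := by rw [← Finset.mul_sum, ht]
      _ ≤ p * r := Nat.mul_le_mul_left _ hm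
  -- pointwise expansion
  have hptw : (fun ω => Y ω ^ r) = fun ω =>
      ∑ s ∈ Finset.range (r + 1),
        ∑ t ∈ Finset.Nat.antidiagonalTuple (p + 1) (r - s),
          ((r.choose s : ℝ) * (Nat.multinomial Finset.univ t : ℝ) *
            ∏ i : Fin (p + 1), β i ^ t i) *
          (ε ω ^ s * X ω ^ (∑ i : Fin (p + 1), (i : ℕ) * t i)) := by
    funext ω
    rw [hY ω, add_comm, add_pow]
    refine Finset.sum_congr rfl fun s hs => ?_
    rw [Finset.sum_pow_eq_sum_piAntidiag, Finset.piAntidiag_univ_fin_eq_antidiagonalTuple,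
      Finset.mul_sum, Finset.sum_mul]
    refine Finset.sum_congr rfl fun t ht => ?_
    have hprod : (∏ i : Fin (p + 1), (β i * X ω ^ (i : ℕ)) ^ t i)
        = (∏ i : Fin (p + 1), β i ^ t i) * X ω ^ (∑ i : Fin (p + 1), (i : ℕ) * t i) := by
      simp_rw [mul_pow, ← pow_mul]
      rw [Finset.prod_mul_distrib, Finset.prod_pow_eq_pow_sum]
    rw [hprod]
    ring
  -- integrate term by term
  have hint : (∫ ω, Y ω ^ r ∂ℙ) =
      ∑ s ∈ Finset.range (r + 1),
        ∑ t ∈ Finset.Nat.antidiagonalTuple (p + 1) (r - s),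
          ((r.choose s : ℝ) * (Nat.multinomial Finset.univ t : ℝ) *
            ∏ i : Fin (p + 1), β i ^ t i) *
          ((∫ ω, ε ω ^ s ∂ℙ) * ∫ ω, X ω ^ (∑ i : Fin (p + 1), (i : ℕ) * t i) ∂ℙ) := by
    rw [hptw]
    rw [integral_finset_sum _ (fun s hs => integrable_finset_sum _ (fun t ht =>
      (hmulint s (Nat.lt_succ_iff.mp (Finset.mem_range.mp hs)) _
        (hw (r - s) (Nat.sub_le r s) t ht)).const_mul _))]
    · refine Finset.sum_congr rfl fun s hs => ?_
      rw [integral_finset_sum _ (fun t ht => ?_)]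
      · refine Finset.sum_congr rfl fun t ht => ?_
        rw [integral_const_mul, hmuleq s (Nat.lt_succ_iff.mp (Finset.mem_range.mp hs)) _
          (hw (r - s) (Nat.sub_le r s) t ht)]
      · exact (hmulint s (Nat.lt_succ_iff.mp (Finset.mem_range.mp hs)) _
          (hw (r - s) (Nat.sub_le r s) t ht)).const_mul _
  -- evaluate the top term s = r
  have htop : (∑ t ∈ Finset.Nat.antidiagonalTuple (p + 1) (r - r),
        ((r.choose r : ℝ) * (Nat.multinomial Finset.univ t : ℝ) *
          ∏ i : Fin (p + 1), β i ^ t i) *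
        ((∫ ω, ε ω ^ r ∂ℙ) * ∫ ω, X ω ^ (∑ i : Fin (p + 1), (i : ℕ) * t i) ∂ℙ))
      = ∫ ω, ε ω ^ r ∂ℙ := by
    rw [Nat.sub_self, Finset.Nat.antidiagonalTuple_zero_right, Finset.sum_singleton]
    simp [Nat.multinomial, integral_const]
  -- coefficient identity
  have hc : ∀ s, s ≤ r → ∀ t ∈ Finset.Nat.antidiagonalTuple (p + 1) (r - s),
      ((r.factorial : ℝ) / ((s.factorial : ℝ) * ∏ i : Fin (p + 1), ((t i).factorial : ℝ)))
        = (r.choose s : ℝ) * (Nat.multinomial Finset.univ t : ℝ) := by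
    intro s hs t ht
    rw [Finset.Nat.mem_antidiagonalTuple] at ht
    have h1 : (∏ i : Fin (p + 1), (t i).factorial) * Nat.multinomial Finset.univ t
        = (r - s).factorial := by
      rw [Nat.multinomial_spec, ht]
    have h2 : r.choose s * s.factorial * (r - s).factorial = r.factorial :=
      Nat.choose_mul_factorial_mul_factorial hs
    have h3 : r.choose s * Nat.multinomial Finset.univ t *
        (s.factorial * ∏ i : Fin (p + 1), (t i).factorial) = r.factorial := by
      calc r.choose s * Nat.multinomial Finset.univ t *
            (s.factorial * ∏ i : Fin (p + 1), (t i).factorial)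
          = r.choose s * s.factorial *
            ((∏ i : Fin (p + 1), (t i).factorial) * Nat.multinomial Finset.univ t) := by ring
        _ = r.factorial := by rw [h1, h2]
    rw [div_eq_iff]
    · exact_mod_cast h3.symm
    · have hsf : (0:ℝ) < s.factorial := by exact_mod_cast s.factorial_pos
      have hpf : (0:ℝ) < ∏ i : Fin (p + 1), ((t i).factorial : ℝ) :=
        Finset.prod_pos fun i _ => by exact_mod_cast (t i).factorial_pos
      exact (mul_pos hsf hpf).ne'
  rw [hint, Finset.sum_range_succ, htop]
  have hsum : ∀ s ∈ Finset.range r,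
      (∑ t ∈ Finset.Nat.antidiagonalTuple (p + 1) (r - s),
        ((r.choose s : ℝ) * (Nat.multinomial Finset.univ t : ℝ) *
          ∏ i : Fin (p + 1), β i ^ t i) *
        ((∫ ω, ε ω ^ s ∂ℙ) * ∫ ω, X ω ^ (∑ i : Fin (p + 1), (i : ℕ) * t i) ∂ℙ))
      = ∑ t ∈ Finset.Nat.antidiagonalTuple (p + 1) (r - s),
          ((r.factorial : ℝ) /
              ((s.factorial : ℝ) * ∏ i : Fin (p + 1), ((t i).factorial : ℝ)))
            * (∫ ω, ε ω ^ s ∂ℙ) * (∏ i : Fin (p + 1), β i ^ t i)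
            * (∫ ω, X ω ^ (∑ i : Fin (p + 1), (i : ℕ) * t i) ∂ℙ) := by
    intro s hs
    refine Finset.sum_congr rfl fun t ht => ?_
    rw [hc s (le_of_lt (Finset.mem_range.mp hs)) t ht]
    ring
  rw [Finset.sum_congr rfl hsum]
  ring
end

section
/- Let X and U be independent real random variables with E|X|^{2p} < ∞ and E|U|^p < ∞, let W = X + U, and suppose the moment matrix M = (E(X^{j+k}))_{0≤j,k≤p} is positive definite. Then for any real numbers c_0, …, c_p there exists a unique polynomial γ₁ of degree at most p such that E{γ₁(X) W^k} = c_k for 0 ≤ k ≤ p. In particular, for any bounded measurable function γ there is a unique polynomial γ₁ of degree at most p with E{γ(X) W^k} = E{γ₁(X) W^k} for 0 ≤ k ≤ p. -/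
open MeasureTheory ProbabilityTheory

/-- Let `X`, `U` be independent with `E|X|^{2p} < ∞`, `E|U|^p < ∞`,
`W = X + U`, and suppose the moment matrix `M = (E(X^{j+k}))` is positive
definite. Then for any reals `c_0, …, c_p` there is a unique polynomial
`γ₁(x) = ∑_j η_j x^j` of degree at most `p` with `E(γ₁(X) W^k) = c_k` for all
`k ≤ p`; in particular, for any bounded measurable `γ` there is a unique such
polynomial with `E(γ(X) W^k) = E(γ₁(X) W^k)` for all `k ≤ p`. -/
theorem statement17
    {Ω : Type*} [MeasureSpace Ω] [IsProbabilityMeasure (ℙ : Measure Ω)]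
    (p : ℕ) (X U : Ω → ℝ) (hX : Measurable X) (hU : Measurable U)
    (hindep : IndepFun X U ℙ)
    (hXmom : Integrable (fun ω => |X ω| ^ (2 * p)) ℙ)
    (hUmom : Integrable (fun ω => |U ω| ^ p) ℙ)
    (W : Ω → ℝ) (hW : ∀ ω, W ω = X ω + U ω)
    (M : Matrix (Fin (p + 1)) (Fin (p + 1)) ℝ)
    (hM : ∀ j k, M j k = ∫ ω, (X ω) ^ ((j : ℕ) + (k : ℕ)) ∂ℙ)
    (hMpos : M.PosDef) :
    (∀ c : Fin (p + 1) → ℝ, ∃! η : Fin (p + 1) → ℝ,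
      ∀ k : Fin (p + 1),
        (∑ j : Fin (p + 1), η j * ∫ ω, (X ω) ^ (j : ℕ) * (W ω) ^ (k : ℕ) ∂ℙ) = c k) ∧
    (∀ γ : ℝ → ℝ, Measurable γ → (∃ C : ℝ, ∀ x, |γ x| ≤ C) →
      ∃! η : Fin (p + 1) → ℝ,
        ∀ k : Fin (p + 1),
          (∑ j : Fin (p + 1), η j * ∫ ω, (X ω) ^ (j : ℕ) * (W ω) ^ (k : ℕ) ∂ℙ)
            = ∫ ω, γ (X ω) * (W ω) ^ (k : ℕ) ∂ℙ) := by
  -- integrability of moments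
  have hmono : ∀ (V : Ω → ℝ) (N : ℕ), Measurable V →
      Integrable (fun ω => |V ω| ^ N) ℙ →
      ∀ m, m ≤ N → Integrable (fun ω => V ω ^ m) ℙ := by
    intro V N hV hVmom m hm
    refine Integrable.mono' ((integrable_const (1 : ℝ)).add hVmom)
      ((hV.pow_const m).aestronglyMeasurable) ?_
    filter_upwards with ω
    rw [Real.norm_eq_abs, abs_pow]
    rcases le_or_gt (|V ω|) 1 with h | h
    · calc |V ω| ^ m ≤ 1 := pow_le_one₀ (abs_nonneg _) h
        _ ≤ 1 + |V ω| ^ N := le_add_of_nonneg_right (by positivity)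
    · calc |V ω| ^ m ≤ |V ω| ^ N := pow_le_pow_right₀ h.le hm
        _ ≤ 1 + |V ω| ^ N := le_add_of_nonneg_left zero_le_one
  have hXm : ∀ m, m ≤ 2 * p → Integrable (fun ω => X ω ^ m) ℙ := hmono X (2 * p) hX hXmom
  have hUm : ∀ m, m ≤ p → Integrable (fun ω => U ω ^ m) ℙ := hmono U p hU hUmom
  -- independence of powers
  have hindpow : ∀ a b : ℕ, IndepFun (fun ω => X ω ^ a) (fun ω => U ω ^ b) ℙ := by
    intro a b
    exact hindep.comp (measurable_id.pow_const a) (measurable_id.pow_const b)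
  have hprod : ∀ a b : ℕ,
      ∫ ω, X ω ^ a * U ω ^ b ∂ℙ = (∫ ω, X ω ^ a ∂ℙ) * ∫ ω, U ω ^ b ∂ℙ := by
    intro a b
    exact (hindpow a b).integral_mul_eq_mul_integral ((hX.pow_const a).aestronglyMeasurable)
      ((hU.pow_const b).aestronglyMeasurable)
  -- expansion of the mixed moments
  have hA : ∀ k j : ℕ, k ≤ p → j ≤ p →
      ∫ ω, X ω ^ j * W ω ^ k ∂ℙ
        = ∑ i ∈ Finset.range (k + 1),
            ((k.choose i : ℝ) * ∫ ω, U ω ^ (k - i) ∂ℙ) * ∫ ω, X ω ^ (i + j) ∂ℙ := by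
    intro k j hk hj
    have h1 : ∀ ω, X ω ^ j * W ω ^ k
        = ∑ i ∈ Finset.range (k + 1),
            (X ω ^ (i + j) * U ω ^ (k - i)) * (k.choose i : ℝ) := by
      intro ω
      rw [hW, add_pow, Finset.mul_sum]
      refine Finset.sum_congr rfl fun i _ => ?_
      rw [pow_add]; ring
    have hint : ∀ i ∈ Finset.range (k + 1),
        Integrable (fun ω => (X ω ^ (i + j) * U ω ^ (k - i)) * (k.choose i : ℝ)) ℙ := by
      intro i hi
      have hi' : i ≤ k := Nat.lt_succ_iff.mp (Finset.mem_range.mp hi)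
      have h1 : Integrable (fun ω => X ω ^ (i + j) * U ω ^ (k - i)) ℙ :=
        (hindpow (i + j) (k - i)).integrable_mul
          (hXm (i + j) (by omega)) (hUm (k - i) (by omega))
      exact h1.mul_const _
    calc ∫ ω, X ω ^ j * W ω ^ k ∂ℙ
        = ∑ i ∈ Finset.range (k + 1),
            ∫ ω, (X ω ^ (i + j) * U ω ^ (k - i)) * (k.choose i : ℝ) ∂ℙ := by
          simp_rw [h1]
          exact integral_finset_sum _ hint
      _ = _ := by
          refine Finset.sum_congr rfl fun i _ => ?_
          rw [integral_mul_const, hprod (i + j) (k - i)]; ring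
  -- the lower-triangular matrix
  set L : Matrix (Fin (p + 1)) (Fin (p + 1)) ℝ :=
    fun k i => ((k : ℕ).choose (i : ℕ) : ℝ) * ∫ ω, U ω ^ ((k : ℕ) - (i : ℕ)) ∂ℙ with hLdef
  set A : Matrix (Fin (p + 1)) (Fin (p + 1)) ℝ :=
    fun k j => ∫ ω, X ω ^ (j : ℕ) * W ω ^ (k : ℕ) ∂ℙ with hAdef
  have hALM : A = L * M := by
    ext k j
    rw [Matrix.mul_apply, hAdef]
    show (∫ ω, X ω ^ (j : ℕ) * W ω ^ (k : ℕ) ∂ℙ) = _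
    rw [hA (k : ℕ) (j : ℕ) k.is_le j.is_le]
    have hg : ∀ i : Fin (p + 1), L k i * M i j
        = (fun i : ℕ => ((k : ℕ).choose i : ℝ) * (∫ ω, U ω ^ ((k : ℕ) - i) ∂ℙ)
            * ∫ ω, X ω ^ (i + (j : ℕ)) ∂ℙ) (i : ℕ) := by
      intro i
      rw [hLdef, hM]
    rw [Finset.sum_congr rfl (fun i _ => hg i),
      Fin.sum_univ_eq_sum_range (fun i : ℕ => ((k : ℕ).choose i : ℝ)
        * (∫ ω, U ω ^ ((k : ℕ) - i) ∂ℙ) * ∫ ω, X ω ^ (i + (j : ℕ)) ∂ℙ)]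
    refine Finset.sum_subset (Finset.range_subset_range.2 (by omega)) ?_
    intro i _ hi
    have hki : (k : ℕ) < i := by
      simp only [Finset.mem_range] at hi; omega
    simp [Nat.choose_eq_zero_of_lt hki]
  -- determinant of L is 1
  have hLtri : L.BlockTriangular OrderDual.toDual := by
    intro k i h
    have : (k : ℕ) < (i : ℕ) := h
    simp [hLdef, Nat.choose_eq_zero_of_lt this]
  have hLdet : L.det = 1 := by
    rw [Matrix.det_of_lowerTriangular L hLtri]
    refine Finset.prod_eq_one fun i _ => ?_
    simp [hLdef, Nat.choose_self]
  have hdet : IsUnit A.det := by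
    rw [hALM, Matrix.det_mul, hLdet, one_mul]
    exact (ne_of_gt hMpos.det_pos).isUnit
  -- unique solvability of the linear system
  have key : ∀ c : Fin (p + 1) → ℝ, ∃! η : Fin (p + 1) → ℝ,
      ∀ k : Fin (p + 1), (∑ j : Fin (p + 1), η j * A k j) = c k := by
    intro c
    have hiff : ∀ η : Fin (p + 1) → ℝ,
        (∀ k, (∑ j, η j * A k j) = c k) ↔ A.mulVec η = c := by
      intro η
      constructor
      · intro h
        funext k
        rw [Matrix.mulVec, dotProduct, ← h k]
        exact Finset.sum_congr rfl fun j _ => mul_comm _ _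
      · intro h k
        rw [← congrFun h k, Matrix.mulVec, dotProduct]
        exact Finset.sum_congr rfl fun j _ => mul_comm _ _
    refine ⟨A⁻¹.mulVec c, (hiff _).mpr ?_, ?_⟩
    · rw [Matrix.mulVec_mulVec, Matrix.mul_nonsing_inv A hdet, Matrix.one_mulVec]
    · intro η hη
      rw [hiff η] at hη
      have := congrArg (A⁻¹.mulVec ·) hη
      simpa [Matrix.mulVec_mulVec, Matrix.nonsing_inv_mul A hdet, Matrix.one_mulVec]
        using this
  constructor
  · intro c
    exact key c
  · intro γ _ _
    exact key (fun k => ∫ ω, γ (X ω) * W ω ^ (k : ℕ) ∂ℙ)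
end
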